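/- arXiv:1006.5295 — 7 statements merged into one kernel-verified Lean document; each statement's English description precedes it below -/
import Mathlib

section
/- Inverse Function Theorem for textile maps (field case): Let U = m^l·C^m be an m-adic neighbourhood of 0 and f : U → C^m a textile map with f(0) = 0. Assume f = ℓ + h and f(U) ⊆ W, where ℓ : U → W is a linear textile bijection with linear inverse ℓ̃ : W → U (ℓ∘ℓ̃ = id_W, ℓ̃∘ℓ = id_U). If ℓ̃∘h is contractive on U, then f admits an inverse on U: there is a textile map g : f(U) → U with f∘g = id on f(U) and g∘f = id on U; in particular id + ℓ̃∘h is a bijection of U onto itself and f(U) = ℓ(U). -/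
/- Inverse Function Theorem for textile maps (field case). -/

noncomputable section

open MvPowerSeries

/-- Coefficient family of a vector of cords. -/
def cf {k : Type} [Field k] {n q : ℕ} (c : Fin q → MvPowerSeries (Fin n) k) :
    Fin q × (Fin n →₀ ℕ) → k :=
  fun ν => MvPowerSeries.coeff ν.2 (c ν.1)

/-- Data of a textile map `C^q → C^p`: every coefficient of the output is a polynomial in
finitely many coefficients of the input. -/
def TexData (k : Type) [Field k] (n q p : ℕ) : Type :=
  Fin p × (Fin n →₀ ℕ) → MvPolynomial (Fin q × (Fin n →₀ ℕ)) k

/-- Evaluation of textile data. -/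
def TexData.eval {k : Type} [Field k] {n q p : ℕ} (F : TexData k n q p)
    (c : Fin q → MvPowerSeries (Fin n) k) : Fin p → MvPowerSeries (Fin n) k :=
  fun j => (fun d => MvPolynomial.eval (cf c) (F (j, d)) : (Fin n →₀ ℕ) → k)

/-- A map between cord spaces is textile if it is the evaluation of some textile data. -/
def IsTextile {k : Type} [Field k] {n q p : ℕ}
    (f : (Fin q → MvPowerSeries (Fin n) k) → Fin p → MvPowerSeries (Fin n) k) : Prop :=
  ∃ F : TexData k n q p, ∀ c, f c = F.eval c

/-- The order of a vector of cords, with values in `ℕ∞` (the order of `0` is `⊤`). -/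
def ordV {k : Type} [Field k] {n q : ℕ} (c : Fin q → MvPowerSeries (Fin n) k) : ℕ∞ :=
  sInf {N : ℕ∞ | ∃ (j : Fin q) (d : Fin n →₀ ℕ),
    MvPowerSeries.coeff d (c j) ≠ 0 ∧ N = (d.sum fun _ e => e : ℕ)}

/-- The `m`-adic neighbourhood `m^l · C^q` of `0`. -/
def nbhd (k : Type) [Field k] (n q l : ℕ) : Set (Fin q → MvPowerSeries (Fin n) k) :=
  {c | ∀ (j : Fin q) (d : Fin n →₀ ℕ),
    (d.sum fun _ e => e) < l → MvPowerSeries.coeff d (c j) = 0}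

/-- `h` is contractive on `U`: it strictly increases the order of differences. -/
def ContractiveOn {k : Type} [Field k] {n q p : ℕ}
    (h : (Fin q → MvPowerSeries (Fin n) k) → Fin p → MvPowerSeries (Fin n) k)
    (U : Set (Fin q → MvPowerSeries (Fin n) k)) : Prop :=
  ∀ a ∈ U, ∀ b ∈ U, a ≠ b → ordV (a - b) < ordV (h a - h b)

/-! ### Auxiliary material -/

section Aux

variable {k : Type} [Field k] {n q p r : ℕ}

/-- Total degree of a multi-index. -/
def degF {n : ℕ} (d : Fin n →₀ ℕ) : ℕ := d.sum fun _ e => e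

lemma coeff_texeval (F : TexData k n q p) (c : Fin q → MvPowerSeries (Fin n) k)
    (j : Fin p) (d : Fin n →₀ ℕ) :
    MvPowerSeries.coeff d (F.eval c j) = MvPolynomial.eval (cf c) (F (j, d)) := by
  rw [MvPowerSeries.coeff_apply]; rfl

lemma cf_texeval (F : TexData k n q p) (c : Fin q → MvPowerSeries (Fin n) k) :
    cf (F.eval c) = fun ν => MvPolynomial.eval (cf c) (F ν) := by
  funext ν; rw [cf, coeff_texeval]

/-- Composition of textile data. -/
def TexData.comp (F : TexData k n q p) (G : TexData k n r q) : TexData k n r p :=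
  fun ν => MvPolynomial.bind₁ G (F ν)

lemma TexData.eval_comp (F : TexData k n q p) (G : TexData k n r q)
    (c : Fin r → MvPowerSeries (Fin n) k) :
    (F.comp G).eval c = F.eval (G.eval c) := by
  funext j
  apply MvPowerSeries.ext; intro d
  rw [coeff_texeval, coeff_texeval, cf_texeval, TexData.comp]
  exact MvPolynomial.eval₂Hom_bind₁ (RingHom.id k) (cf c) G (F (j, d))

/-- Identity textile data. -/
def TexData.idT : TexData k n q q := fun ν => MvPolynomial.X ν

lemma TexData.eval_idT (c : Fin q → MvPowerSeries (Fin n) k) :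
    (TexData.idT).eval c = c := by
  funext j; apply MvPowerSeries.ext; intro d
  rw [coeff_texeval, TexData.idT, MvPolynomial.eval_X]; rfl

/-- Difference of textile data. -/
def TexData.subT (F G : TexData k n q p) : TexData k n q p := fun ν => F ν - G ν

lemma TexData.eval_subT (F G : TexData k n q p) (c : Fin q → MvPowerSeries (Fin n) k) :
    (F.subT G).eval c = F.eval c - G.eval c := by
  funext j; apply MvPowerSeries.ext; intro d
  rw [Pi.sub_apply, map_sub, coeff_texeval, coeff_texeval, coeff_texeval,
    TexData.subT, map_sub]

/-- The textile data of the iterates of the fixed-point iteration `a ↦ c - H a`. -/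
def TexData.iter (Hd : TexData k n q q) : ℕ → TexData k n q q
  | 0 => TexData.idT
  | K + 1 => TexData.idT.subT (Hd.comp (Hd.iter K))

lemma ordV_le_of_ne {c : Fin q → MvPowerSeries (Fin n) k} {j : Fin q} {d : Fin n →₀ ℕ}
    (hc : MvPowerSeries.coeff d (c j) ≠ 0) : ordV c ≤ (degF d : ℕ∞) :=
  sInf_le ⟨j, d, hc, rfl⟩

lemma coeff_eq_zero_of_lt_ordV {c : Fin q → MvPowerSeries (Fin n) k} {j : Fin q}
    {d : Fin n →₀ ℕ} (hc : (degF d : ℕ∞) < ordV c) :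
    MvPowerSeries.coeff d (c j) = 0 := by
  by_contra hne
  exact absurd (ordV_le_of_ne hne) (not_le_of_gt hc)

lemma le_ordV {c : Fin q → MvPowerSeries (Fin n) k} {N : ℕ}
    (hc : ∀ (j : Fin q) (d : Fin n →₀ ℕ), degF d < N → MvPowerSeries.coeff d (c j) = 0) :
    (N : ℕ∞) ≤ ordV c := by
  refine le_sInf ?_
  rintro M ⟨j, d, hne, rfl⟩
  exact_mod_cast not_lt.mp fun hlt => hne (hc j d hlt)

lemma ordV_neg (c : Fin q → MvPowerSeries (Fin n) k) : ordV (-c) = ordV c := by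
  unfold ordV
  congr 1
  ext N
  constructor
  · rintro ⟨j, d, hne, rfl⟩
    refine ⟨j, d, fun hz => hne ?_, rfl⟩
    rw [Pi.neg_apply, map_neg, hz, neg_zero]
  · rintro ⟨j, d, hne, rfl⟩
    refine ⟨j, d, fun hz => hne ?_, rfl⟩
    rw [Pi.neg_apply, map_neg, neg_eq_zero] at hz
    exact hz

end Aux

/-- **Inverse Function Theorem for textile maps (field case).**
Let `U = m^l·C^m` and let `f : U → C^m` be textile with `f 0 = 0`, `f = ℓ + h` on `U`, and
`f(U) ⊆ W`, where `ℓ : U → W` is a linear textile bijection with linear textile inverse `ℓ̃`.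
If `ℓ̃ ∘ h` is contractive on `U`, then `f` admits a textile inverse `g` on `U`; in particular
`id + ℓ̃∘h` is a bijection of `U` onto itself and `f(U) = ℓ(U)`. -/
theorem inverse_function_theorem_textile
    {k : Type} [Field k] [CharZero k] {n m : ℕ} (l : ℕ)
    (U : Set (Fin m → MvPowerSeries (Fin n) k)) (hU : U = nbhd k n m l)
    (W : Set (Fin m → MvPowerSeries (Fin n) k))
    (f ℓ ℓt h : (Fin m → MvPowerSeries (Fin n) k) → Fin m → MvPowerSeries (Fin n) k)
    (hf_tex : IsTextile f) (hf0 : f 0 = 0)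
    (hℓ_tex : IsTextile ℓ) (hℓ_lin : IsLinearMap k ℓ)
    (hℓt_tex : IsTextile ℓt) (hℓt_lin : IsLinearMap k ℓt)
    (hdecomp : ∀ a ∈ U, f a = ℓ a + h a)
    (hfU : ∀ a ∈ U, f a ∈ W)
    (hℓU : ∀ a ∈ U, ℓ a ∈ W)
    (hℓℓt : ∀ w ∈ W, ℓt w ∈ U ∧ ℓ (ℓt w) = w)
    (hℓtℓ : ∀ a ∈ U, ℓt (ℓ a) = a)
    (hcontr : ContractiveOn (fun a => ℓt (h a)) U) :
    ∃ g : (Fin m → MvPowerSeries (Fin n) k) → Fin m → MvPowerSeries (Fin n) k,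
      IsTextile g ∧
      (∀ w ∈ f '' U, g w ∈ U ∧ f (g w) = w) ∧
      (∀ a ∈ U, g (f a) = a) ∧
      Set.BijOn (fun a => a + ℓt (h a)) U U ∧
      f '' U = ℓ '' U := by
  classical
  obtain ⟨Ff, hFf⟩ := hf_tex
  obtain ⟨Fℓt, hFℓt⟩ := hℓt_tex
  -- The auxiliary map `H = ℓt ∘ f - id`, which agrees with `ℓt ∘ h` on `U`.
  set H : (Fin m → MvPowerSeries (Fin n) k) → Fin m → MvPowerSeries (Fin n) k :=
    fun a => ℓt (f a) - a with hHdef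
  set Hd : TexData k n m m := (Fℓt.comp Ff).subT TexData.idT with hHddef
  set T : ℕ → (Fin m → MvPowerSeries (Fin n) k) → Fin m → MvPowerSeries (Fin n) k :=
    fun K c => (Hd.iter K).eval c with hTdef
  set g0d : TexData k n m m := fun ν => Hd.iter (degF ν.2 + 1) ν with hg0ddef
  set g0 : (Fin m → MvPowerSeries (Fin n) k) → Fin m → MvPowerSeries (Fin n) k :=
    g0d.eval with hg0def
  set Φ : (Fin m → MvPowerSeries (Fin n) k) → Fin m → MvPowerSeries (Fin n) k :=
    fun a => a + H a with hΦdef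
  -- defining equations
  have hHE : ∀ a, H a = ℓt (f a) - a := fun a => rfl
  have hHeval : ∀ c, H c = Hd.eval c := by
    intro c
    rw [hHE, hHddef, TexData.eval_subT, TexData.eval_comp, TexData.eval_idT, ← hFf, ← hFℓt]
  have hT0 : ∀ c, T 0 c = c := fun c => TexData.eval_idT c
  have hTsucc : ∀ K c, T (K + 1) c = c - H (T K c) := by
    intro K c
    rw [hTdef]
    show (TexData.idT.subT (Hd.comp (Hd.iter K))).eval c = _
    rw [TexData.eval_subT, TexData.eval_comp, TexData.eval_idT, hHeval]
  have hg0coeff : ∀ c (j : Fin m) (d : Fin n →₀ ℕ),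
      MvPowerSeries.coeff d (g0 c j) =
        MvPowerSeries.coeff d (T (degF d + 1) c j) := by
    intro c j d
    rw [hg0def, coeff_texeval, hTdef, coeff_texeval]
  have hΦE : ∀ a, Φ a = a + H a := fun a => rfl
  have hΦeq : ∀ a, Φ a = ℓt (f a) := by
    intro a
    rw [hΦE, hHE]; abel
  have hgtex : ∀ w, g0 (ℓt w) = (g0d.comp Fℓt).eval w := by
    intro w
    rw [TexData.eval_comp, ← hFℓt, ← hg0def]
  clear_value H Hd T g0d g0 Φ
  clear hHdef hHddef hTdef hg0ddef hg0def hΦdef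
  -- U is closed under subtraction and contains ℓt(f(U))
  have hUsub : ∀ a ∈ U, ∀ b ∈ U, a - b ∈ U := by
    intro a ha b hb
    rw [hU] at ha hb ⊢
    intro j d hd
    rw [Pi.sub_apply, map_sub, ha j d hd, hb j d hd, sub_zero]
  have hHU : ∀ a ∈ U, H a ∈ U := by
    intro a ha
    rw [hHE]
    exact hUsub _ (hℓℓt _ (hfU a ha)).1 _ ha
  -- On U, `H` coincides with `ℓt ∘ h`.
  have hHeq : ∀ a ∈ U, H a = ℓt (h a) := by
    intro a ha
    rw [hHE, hdecomp a ha, hℓt_lin.map_add, hℓtℓ a ha, add_sub_cancel_left]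
  have hcontrH : ∀ a ∈ U, ∀ b ∈ U, a ≠ b → ordV (a - b) < ordV (H a - H b) := by
    intro a ha b hb hab
    rw [hHeq a ha, hHeq b hb]
    exact hcontr a ha b hb hab
  have hTU : ∀ c ∈ U, ∀ K, T K c ∈ U := by
    intro c hc K
    induction K with
    | zero => rw [hT0]; exact hc
    | succ K ih => rw [hTsucc]; exact hUsub _ hc _ (hHU _ ih)
  -- the successive differences have growing order
  have hord : ∀ c ∈ U, ∀ K : ℕ, (K : ℕ∞) ≤ ordV (T (K + 1) c - T K c) := by
    intro c hc K
    induction K with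
    | zero => simp
    | succ K ih =>
      by_cases heq : T (K + 1) c = T K c
      · have h2 : T (K + 1 + 1) c = T (K + 1) c := by
          rw [hTsucc (K + 1) c, heq, ← hTsucc K c]
          exact heq
        rw [h2, sub_self]
        have h0 : ordV (0 : Fin m → MvPowerSeries (Fin n) k) = ⊤ := by
          rw [ordV]
          refine (congrArg sInf (?_ : _ = (∅ : Set ℕ∞))).trans sInf_empty
          ext N
          simp only [Set.mem_setOf_eq, Set.mem_empty_iff_false, iff_false, not_exists]
          intro j d hd
          exact absurd (by simp) hd.1
        rw [h0]; exact le_top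
      · have step1 : T (K + 1 + 1) c - T (K + 1) c
            = (c - H (T (K + 1) c)) - (c - H (T K c)) := by
          rw [hTsucc (K + 1) c, hTsucc K c]
        have hdiff : T (K + 1 + 1) c - T (K + 1) c = -(H (T (K + 1) c) - H (T K c)) := by
          rw [step1]; abel
        have hlt := hcontrH _ (hTU c hc (K + 1)) _ (hTU c hc K) heq
        have h1 : ((K : ℕ∞) : ℕ∞) < ordV (H (T (K + 1) c) - H (T K c)) :=
          lt_of_le_of_lt ih hlt
        rw [hdiff, ordV_neg]
        exact_mod_cast Order.add_one_le_of_lt h1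
  -- coefficients stabilize
  have hsucc_coeff : ∀ c ∈ U, ∀ (j : Fin m) (d : Fin n →₀ ℕ) (K : ℕ), degF d < K →
      MvPowerSeries.coeff d (T (K + 1) c j) = MvPowerSeries.coeff d (T K c j) := by
    intro c hc j d K hdK
    have h1 : (degF d : ℕ∞) < ordV (T (K + 1) c - T K c) :=
      lt_of_lt_of_le (by exact_mod_cast hdK) (hord c hc K)
    have h2 := coeff_eq_zero_of_lt_ordV (j := j) h1
    rw [Pi.sub_apply, map_sub, sub_eq_zero] at h2
    exact h2
  have hstab : ∀ c ∈ U, ∀ (j : Fin m) (d : Fin n →₀ ℕ) (K : ℕ), degF d < K →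
      MvPowerSeries.coeff d (T K c j) =
        MvPowerSeries.coeff d (T (degF d + 1) c j) := by
    intro c hc j d K hdK
    induction K with
    | zero => omega
    | succ K ih =>
      rcases Nat.lt_or_ge (degF d) K with hK | hK
      · rw [hsucc_coeff c hc j d K hK, ih hK]
      · have hKd : K = degF d := by omega
        rw [hKd]
  have hg0coeff' : ∀ c ∈ U, ∀ (j : Fin m) (d : Fin n →₀ ℕ) (K : ℕ), degF d < K →
      MvPowerSeries.coeff d (g0 c j) = MvPowerSeries.coeff d (T K c j) := by
    intro c hc j d K hdK
    rw [hg0coeff, hstab c hc j d K hdK]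
  have hg0U : ∀ c ∈ U, g0 c ∈ U := by
    intro c hc
    rw [hU]
    intro j d hd
    rw [hg0coeff]
    have h3 := hTU c hc (degF d + 1)
    rw [hU] at h3
    exact h3 j d hd
  have hdiffordK : ∀ c ∈ U, ∀ K : ℕ, (K : ℕ∞) ≤ ordV (g0 c - T K c) := by
    intro c hc K
    apply le_ordV
    intro j d hd
    rw [Pi.sub_apply, map_sub, hg0coeff' c hc j d K hd, sub_self]
  have hΦU : ∀ a ∈ U, Φ a ∈ U := by
    intro a ha
    rw [hΦeq]
    exact (hℓℓt _ (hfU a ha)).1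
  -- Φ (g0 c) = c for c ∈ U
  have hΦfix : ∀ c ∈ U, Φ (g0 c) = c := by
    intro c hc
    have key : ∀ (j : Fin m) (d : Fin n →₀ ℕ),
        MvPowerSeries.coeff d ((Φ (g0 c) - c) j) = 0 := by
      intro j d
      set K := degF d + 1 with hKdef
      have hid : Φ (g0 c) - c = (g0 c - T (K + 1) c) + (H (g0 c) - H (T K c)) := by
        rw [hΦE (g0 c), hTsucc K c]
        abel
      rw [hid, Pi.add_apply, map_add]
      have e1 : MvPowerSeries.coeff d ((g0 c - T (K + 1) c) j) = 0 := by
        rw [Pi.sub_apply, map_sub, hg0coeff' c hc j d (K + 1) (by omega), sub_self]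
      have e2 : MvPowerSeries.coeff d ((H (g0 c) - H (T K c)) j) = 0 := by
        by_cases hgeq : g0 c = T K c
        · rw [hgeq, sub_self]; simp
        · have hlt := hcontrH _ (hg0U c hc) _ (hTU c hc K) hgeq
          have h1 : (degF d : ℕ∞) < ordV (g0 c - T K c) :=
            lt_of_lt_of_le (by exact_mod_cast Nat.lt_succ_self _) (hdiffordK c hc K)
          exact coeff_eq_zero_of_lt_ordV (lt_trans h1 hlt)
      rw [e1, e2, add_zero]
    funext j
    apply MvPowerSeries.ext; intro d
    have h4 := key j d
    rw [Pi.sub_apply, map_sub, sub_eq_zero] at h4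
    exact h4
  -- injectivity of Φ on U
  have hΦinj : Set.InjOn Φ U := by
    intro a ha b hb hab
    by_contra hne
    have hab' : a - b = -(H a - H b) := by
      have h5 : a + H a = b + H b := by rw [← hΦE, ← hΦE, hab]
      have h6 := sub_eq_zero.mpr h5
      rw [show a + H a - (b + H b) = (a - b) + (H a - H b) by abel] at h6
      linear_combination (norm := abel) h6
    have h7 := hcontrH a ha b hb hne
    rw [hab', ordV_neg] at h7
    exact lt_irrefl _ h7
  have hg0Φ : ∀ a ∈ U, g0 (Φ a) = a := by
    intro a ha
    exact hΦinj (hg0U _ (hΦU a ha)) ha (hΦfix _ (hΦU a ha))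
  -- relation between Φ and the statement's map
  have hΦ' : ∀ a ∈ U, a + ℓt (h a) = Φ a := by
    intro a ha
    rw [hΦE, hHeq a ha]
  -- f = ℓ ∘ Φ on U
  have hfℓΦ : ∀ a ∈ U, f a = ℓ (Φ a) := by
    intro a ha
    rw [hΦeq, (hℓℓt _ (hfU a ha)).2]
  -- the inverse map
  refine ⟨fun w => g0 (ℓt w), ⟨g0d.comp Fℓt, fun w => ?_⟩, ?_, ?_, ?_, ?_⟩
  · exact hgtex w
  · rintro w ⟨a, ha, rfl⟩
    have h1 : ℓt (f a) = Φ a := (hΦeq a).symm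
    show g0 (ℓt (f a)) ∈ U ∧ f (g0 (ℓt (f a))) = f a
    rw [h1, hg0Φ a ha]
    exact ⟨ha, rfl⟩
  · intro a ha
    have h1 : ℓt (f a) = Φ a := (hΦeq a).symm
    show g0 (ℓt (f a)) = a
    rw [h1, hg0Φ a ha]
  · refine ⟨fun a ha => ?_, fun a ha b hb hab => ?_, fun c hc => ?_⟩
    · show a + ℓt (h a) ∈ U
      rw [hΦ' a ha]; exact hΦU a ha
    · apply hΦinj ha hb
      rw [← hΦ' a ha, ← hΦ' b hb]; exact hab
    · refine ⟨g0 c, hg0U c hc, ?_⟩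
      show g0 c + ℓt (h (g0 c)) = c
      rw [hΦ' _ (hg0U c hc)]
      exact hΦfix c hc
  · ext w
    constructor
    · rintro ⟨a, ha, rfl⟩
      exact ⟨Φ a, hΦU a ha, (hfℓΦ a ha).symm⟩
    · rintro ⟨a, ha, rfl⟩
      refine ⟨g0 a, hg0U a ha, ?_⟩
      rw [hfℓΦ _ (hg0U a ha), hΦfix a ha]
end
end

section
/- Characterization of Γ-shifting textile maps: Let L be a positive linear form on ℝ^n, Γ ∈ L(ℤⁿ), U = m^l·C^m, and h : U → C a textile map. Then h is Γ-shifting on U, i.e. ord_L(h(a) − h(b)) ≥ ord_L(a − b) + Γ for all a, b ∈ U, if and only if for every α ∈ ℕⁿ the coefficient h_α depends only on the coefficients c_ν with L·ν̄ ≤ L·α − Γ: whenever a, b ∈ U satisfy a_ν = b_ν for all ν ∈ ℕ^{n+1} with L·ν̄ ≤ L·α − Γ, then h_α(a) = h_α(b). -/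
/- Characterization of Γ-shifting textile maps. -/

noncomputable section

open MvPowerSeries

/-- Data of a textile map `C^q → C`: every coefficient of the output is a polynomial in
finitely many coefficients of the input. -/
def TexData1 (k : Type) [Field k] (n q : ℕ) : Type :=
  (Fin n →₀ ℕ) → MvPolynomial (Fin q × (Fin n →₀ ℕ)) k

/-- Evaluation of textile data with values in `C`. -/
def TexData1.eval {k : Type} [Field k] {n q : ℕ} (H : TexData1 k n q)
    (c : Fin q → MvPowerSeries (Fin n) k) : MvPowerSeries (Fin n) k :=
  (fun d => MvPolynomial.eval (cf c) (H d) : (Fin n →₀ ℕ) → k)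

/-- The value of a positive linear form `L`, given by weights `w`, on a multi-exponent. -/
def Lval {n : ℕ} (w : Fin n → ℝ) (d : Fin n →₀ ℕ) : ℝ :=
  d.sum fun i e => w i * (e : ℝ)

/-- The order of a single power series with respect to `L`, with values in `EReal`
(the order of `0` is `⊤`). -/
def ordL1 {k : Type} [Field k] {n : ℕ} (w : Fin n → ℝ) (c : MvPowerSeries (Fin n) k) : EReal :=
  sInf {x : EReal | ∃ d : Fin n →₀ ℕ, MvPowerSeries.coeff d c ≠ 0 ∧ x = (Lval w d : ℝ)}

/-- The order of a vector of cords with respect to `L`, with values in `EReal`. -/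
def ordLV {k : Type} [Field k] {n q : ℕ} (w : Fin n → ℝ)
    (c : Fin q → MvPowerSeries (Fin n) k) : EReal :=
  sInf {x : EReal | ∃ (j : Fin q) (d : Fin n →₀ ℕ),
    MvPowerSeries.coeff d (c j) ≠ 0 ∧ x = (Lval w d : ℝ)}

section Helpers

variable {n q : ℕ} {w : Fin n → ℝ}

lemma lval_nonneg (hw : ∀ i, 0 < w i) (d : Fin n →₀ ℕ) : 0 ≤ Lval w d := by
  apply Finset.sum_nonneg
  intro i _
  exact mul_nonneg (hw i).le (Nat.cast_nonneg _)

lemma lval_term_le (hw : ∀ i, 0 < w i) (d : Fin n →₀ ℕ) (i : Fin n) :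
    w i * (d i : ℝ) ≤ Lval w d := by
  by_cases h : i ∈ d.support
  · exact Finset.single_le_sum (fun j _ => mul_nonneg (hw j).le (Nat.cast_nonneg _)) h
  · have h0 : d i = 0 := Finsupp.notMem_support_iff.mp h
    rw [h0]
    simpa using lval_nonneg hw d

lemma finite_lval_le (hw : ∀ i, 0 < w i) (c : ℝ) :
    {d : Fin n →₀ ℕ | Lval w d ≤ c}.Finite := by
  apply (Set.finite_Iic (Finsupp.equivFunOnFinite.symm (fun i => ⌈c / w i⌉₊))).subset
  intro d hd
  rw [Set.mem_Iic, Finsupp.le_def]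
  intro i
  have h1 : w i * (d i : ℝ) ≤ c := le_trans (lval_term_le hw d i) hd
  have h2 : (d i : ℝ) ≤ c / w i := (le_div_iff₀' (hw i)).mpr h1
  have h3 : (d i : ℝ) ≤ (⌈c / w i⌉₊ : ℝ) := h2.trans (Nat.le_ceil _)
  exact Nat.cast_le.mp h3

lemma exists_lval_min (hw : ∀ i, 0 < w i) (P : Fin q × (Fin n →₀ ℕ) → Prop)
    (hP : ∃ p, P p) :
    ∃ p, P p ∧ ∀ p', P p' → Lval w p.2 ≤ Lval w p'.2 := by
  obtain ⟨p₀, hp₀⟩ := hP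
  have hfin : {p : Fin q × (Fin n →₀ ℕ) | P p ∧ Lval w p.2 ≤ Lval w p₀.2}.Finite := by
    apply (Set.finite_univ.prod (finite_lval_le hw (Lval w p₀.2))).subset
    intro p hp
    exact ⟨trivial, hp.2⟩
  obtain ⟨p₁, hp₁, hmin⟩ :=
    Set.exists_min_image _ (fun p => Lval w p.2) hfin ⟨p₀, hp₀, le_refl _⟩
  refine ⟨p₁, hp₁.1, fun p' hp' => ?_⟩
  by_cases hle : Lval w p'.2 ≤ Lval w p₀.2
  · exact hmin p' ⟨hp', hle⟩
  · exact le_trans hp₁.2 (le_of_not_ge hle)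

end Helpers

/-- **Characterization of Γ-shifting textile maps.**
Let `L` be a positive linear form on `ℝⁿ`, `Γ ∈ L(ℤⁿ)`, `U = m^l·C^m`, and `h : U → C` a
textile map. Then `h` is `Γ`-shifting on `U`, i.e. `ord_L(h a − h b) ≥ ord_L(a − b) + Γ` for
all `a, b ∈ U`, if and only if for every `α ∈ ℕⁿ` the coefficient `h_α` depends only on the
coefficients `c_ν` with `L·ν̄ ≤ L·α − Γ`. -/
theorem gamma_shifting_characterization
    {k : Type} [Field k] [CharZero k] {n m : ℕ} (l : ℕ)
    (w : Fin n → ℝ) (hw : ∀ i, 0 < w i)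
    (Γ : ℝ) (hΓ : ∃ z : Fin n → ℤ, Γ = ∑ i, w i * (z i : ℝ))
    (U : Set (Fin m → MvPowerSeries (Fin n) k)) (hU : U = nbhd k n m l)
    (H : TexData1 k n m) :
    (∀ a ∈ U, ∀ b ∈ U,
        ordLV w (a - b) + (Γ : EReal) ≤ ordL1 w (H.eval a - H.eval b))
      ↔
    (∀ α : Fin n →₀ ℕ, ∀ a ∈ U, ∀ b ∈ U,
        (∀ (j : Fin m) (β : Fin n →₀ ℕ), Lval w β ≤ Lval w α - Γ →
          MvPowerSeries.coeff β (a j) = MvPowerSeries.coeff β (b j)) →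
        MvPowerSeries.coeff α (H.eval a) = MvPowerSeries.coeff α (H.eval b)) := by
  constructor
  · -- shifting ⇒ dependence
    intro hsh α a ha b hb hagree
    by_contra hne'
    have hne : MvPowerSeries.coeff α (H.eval a - H.eval b) ≠ 0 := by
      rw [map_sub]
      exact sub_ne_zero.mpr hne'
    -- the set defining ordLV (a - b) is nonempty
    have hex : ∃ p : Fin m × (Fin n →₀ ℕ),
        MvPowerSeries.coeff p.2 ((a - b) p.1) ≠ 0 := by
      by_contra hempty
      push_neg at hempty
      have hab : a = b := by
        funext j
        apply MvPowerSeries.ext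
        intro d
        have := hempty (j, d)
        rw [Pi.sub_apply, map_sub, sub_eq_zero] at this
        exact this
      exact hne' (by rw [hab])
    obtain ⟨p₁, hp₁, hmin⟩ := exists_lval_min hw _ hex
    -- lower bound for ordLV
    have hlow : (↑(Lval w p₁.2) : EReal) ≤ ordLV w (a - b) := by
      apply le_sInf
      rintro x ⟨j, d, hc, rfl⟩
      exact_mod_cast hmin (j, d) hc
    -- upper bound for ordL1
    have hup : ordL1 w (H.eval a - H.eval b) ≤ (↑(Lval w α) : EReal) :=
      sInf_le ⟨α, hne, rfl⟩
    have hchain : (↑(Lval w p₁.2) : EReal) + (Γ : EReal) ≤ (↑(Lval w α) : EReal) :=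
      le_trans (add_le_add_left hlow _) (le_trans (hsh a ha b hb) hup)
    have hreal : Lval w p₁.2 + Γ ≤ Lval w α := by
      rw [← EReal.coe_add] at hchain
      exact_mod_cast hchain
    have := hagree p₁.1 p₁.2 (by linarith)
    apply hp₁
    rw [Pi.sub_apply, map_sub, this, sub_self]
  · -- dependence ⇒ shifting
    intro hdep a ha b hb
    apply le_sInf
    rintro x ⟨α, hc, rfl⟩
    -- from hc, a and b must differ on some small coefficient
    have : ¬ (∀ (j : Fin m) (β : Fin n →₀ ℕ), Lval w β ≤ Lval w α - Γ →
        MvPowerSeries.coeff β (a j) = MvPowerSeries.coeff β (b j)) := by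
      intro hall
      have := hdep α a ha b hb hall
      rw [map_sub, this, sub_self] at hc
      exact hc rfl
    push_neg at this
    obtain ⟨j, β, hβle, hβne⟩ := this
    have hmem : ordLV w (a - b) ≤ (↑(Lval w β) : EReal) := by
      apply sInf_le
      refine ⟨j, β, ?_, rfl⟩
      rw [Pi.sub_apply, map_sub]
      exact sub_ne_zero.mpr hβne
    calc ordLV w (a - b) + (Γ : EReal) ≤ (↑(Lval w β) : EReal) + (Γ : EReal) :=
          add_le_add_left hmem _
      _ = ((Lval w β + Γ : ℝ) : EReal) := by rw [EReal.coe_add]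
      _ ≤ (↑(Lval w α) : EReal) := by exact_mod_cast (by linarith : Lval w β + Γ ≤ Lval w α)
end
end

section
/- Sufficient criterion for contractiveness over a test-ring: Let A be a test-ring with maximal ideal n, U an m-adic neighbourhood of 0 in A_A^m (arcs over A, i.e. 1-cords), and h : U → A_A a textile map with h(0) = 0. Suppose that for each i ∈ ℕ the coefficient h_i decomposes as h_i = h'_i + h''_i, where h'_i is a polynomial in the variables x^j_l (1 ≤ j ≤ m, 0 ≤ l < i) with coefficients in A, and h''_i is a polynomial in the variables x^j_i (1 ≤ j ≤ m) with coefficients in n. Then h is contractive on U with respect to the refined order W(·), i.e. W(h(a) − h(b)) > W(a − b) for all a, b ∈ U. -/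
/- Sufficient criterion for contractiveness over a test-ring (arcs). -/

noncomputable section

/-- Evaluation of textile data for maps between arc spaces over `A`:
the `i`-th coefficient of the output is the polynomial `H i` evaluated at the
coefficients of the input. -/
def arcEval {A : Type} [CommRing A] {m : ℕ} (H : ℕ → MvPolynomial (Fin m × ℕ) A)
    (c : Fin m → ℕ → A) : ℕ → A :=
  fun i => MvPolynomial.eval (fun v : Fin m × ℕ => c v.1 v.2) (H i)

/-- The order of a vector of arcs, with values in `ℕ∞`. -/
def ordS {A : Type} [CommRing A] {q : ℕ} (c : Fin q → ℕ → A) : ℕ∞ :=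
  sInf {N : ℕ∞ | ∃ (j : Fin q) (i : ℕ), c j i ≠ 0 ∧ N = (i : ℕ∞)}

-- `pow(a)`: the largest `i` with `a ∈ 𝔫^i` for `a ≠ 0`, and `N` for `a = 0`.
open Classical in
def powIdx {A : Type} [CommRing A] (𝔫 : Ideal A) (N : ℕ) (a : A) : ℕ :=
  if a = 0 then N else sSup {i : ℕ | a ∈ 𝔫 ^ i}

/-- Second component of the refined order: `pow` of the lowest-order coefficient. -/
def powAtMin {A : Type} [CommRing A] (𝔫 : Ideal A) (N : ℕ) {q : ℕ}
    (c : Fin q → ℕ → A) : ℕ :=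
  sInf {e : ℕ | ∃ (j : Fin q) (i : ℕ), c j i ≠ 0 ∧ (i : ℕ∞) = ordS c ∧
    e = powIdx 𝔫 N (c j i)}

/-- The refined order `W(c) = (ord c, pow(c_{ord c}))`. -/
def WOrd {A : Type} [CommRing A] (𝔫 : Ideal A) (N : ℕ) {q : ℕ}
    (c : Fin q → ℕ → A) : ℕ∞ × ℕ :=
  (ordS c, powAtMin 𝔫 N c)

/-- Lexicographic comparison on `ℕ∞ × ℕ`. -/
def refLt (x y : ℕ∞ × ℕ) : Prop :=
  x.1 < y.1 ∨ (x.1 = y.1 ∧ x.2 < y.2)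

/-- The `m`-adic neighbourhood `m^l · A_A^q` of `0` in the space of vectors of arcs. -/
def nbhdArc (A : Type) [CommRing A] (q l : ℕ) : Set (Fin q → ℕ → A) :=
  {c | ∀ (j : Fin q) (i : ℕ), i < l → c j i = 0}

open MvPolynomial in
lemma eval_sub_mem_aux {σ A : Type*} [CommRing A] (p : MvPolynomial σ A)
    (I J : Ideal A) (hc : ∀ d, p.coeff d ∈ I) (f g : σ → A)
    (hfg : ∀ v ∈ p.vars, f v - g v ∈ J) :
    eval f p - eval g p ∈ I * J := by
  classical
  rw [eval_eq, eval_eq, ← Finset.sum_sub_distrib]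
  refine Ideal.sum_mem _ fun d hd => ?_
  rw [← mul_sub]
  refine Ideal.mul_mem_mul (hc d) ?_
  rw [← Ideal.Quotient.eq, map_prod, map_prod]
  refine Finset.prod_congr rfl fun v hv => ?_
  rw [map_pow, map_pow, Ideal.Quotient.eq.mpr (hfg v ((mem_vars v).mpr ⟨d, hd, hv⟩))]

lemma eval_eq_of_agree {σ A : Type*} [CommRing A] (p : MvPolynomial σ A)
    (f g : σ → A) (h : ∀ v ∈ p.vars, f v = g v) :
    MvPolynomial.eval f p = MvPolynomial.eval g p := by
  have := eval_sub_mem_aux p ⊤ ⊥ (fun _ => trivial) f g (fun v hv => by simp [h v hv])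
  rw [Ideal.mul_bot, Ideal.mem_bot, sub_eq_zero] at this
  exact this

lemma bddAbove_powSet {A : Type} [CommRing A] {𝔫 : Ideal A} {N : ℕ}
    (hN : 𝔫 ^ N = ⊥) {a : A} (ha : a ≠ 0) : BddAbove {i : ℕ | a ∈ 𝔫 ^ i} := by
  refine ⟨N, fun i hi => ?_⟩
  by_contra hlt
  push_neg at hlt
  exact ha (by simpa [hN] using Ideal.pow_le_pow_right hlt.le hi)

lemma powIdx_spec {A : Type} [CommRing A] {𝔫 : Ideal A} {N : ℕ}
    (hN : 𝔫 ^ N = ⊥) {a : A} (ha : a ≠ 0) : a ∈ 𝔫 ^ powIdx 𝔫 N a := by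
  rw [powIdx, if_neg ha]
  exact Nat.sSup_mem ⟨0, by simp⟩ (bddAbove_powSet hN ha)

lemma le_powIdx {A : Type} [CommRing A] {𝔫 : Ideal A} {N : ℕ}
    (hN : 𝔫 ^ N = ⊥) {a : A} (ha : a ≠ 0) {j : ℕ} (hj : a ∈ 𝔫 ^ j) :
    j ≤ powIdx 𝔫 N a := by
  rw [powIdx, if_neg ha]
  exact le_csSup (bddAbove_powSet hN ha) hj

/-- **Sufficient criterion for contractiveness over a test-ring.**
Let `A` be a test-ring with maximal ideal `𝔫`, `U` an `m`-adic neighbourhood of `0` in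
`A_A^m`, and `h : U → A_A` a textile map with `h 0 = 0` whose `i`-th coefficient decomposes
as `h_i = h'_i + h''_i`, with `h'_i` a polynomial (coefficients in `A`) in the variables
`x^j_l` with `l < i`, and `h''_i` a polynomial with coefficients in `𝔫` in the variables
`x^j_i`. Then `h` is contractive on `U` with respect to the refined order `W(·)`. -/
theorem contractive_criterion_test_ring
    {k : Type} [Field k] [CharZero k]
    {A : Type} [CommRing A] [Algebra k A] [IsLocalRing A]
    (N : ℕ) (hN : (IsLocalRing.maximalIdeal A) ^ N = ⊥)
    {m : ℕ} (l : ℕ)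
    (U : Set (Fin m → ℕ → A)) (hU : U = nbhdArc A m l)
    (H : ℕ → MvPolynomial (Fin m × ℕ) A)
    (h0 : arcEval H 0 = 0)
    (hsplit : ∀ i : ℕ, ∃ P Q : MvPolynomial (Fin m × ℕ) A,
      H i = P + Q ∧
      (∀ v ∈ P.vars, v.2 < i) ∧
      (∀ v ∈ Q.vars, v.2 = i) ∧
      (∀ d, Q.coeff d ∈ IsLocalRing.maximalIdeal A)) :
    ∀ a ∈ U, ∀ b ∈ U, a ≠ b →
      refLt (WOrd (IsLocalRing.maximalIdeal A) N (a - b))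
            (WOrd (IsLocalRing.maximalIdeal A) N
              (fun _ : Fin 1 => arcEval H a - arcEval H b)) := by
  classical
  set 𝔫 := IsLocalRing.maximalIdeal A with h𝔫
  intro a _ b _ hab
  set c : Fin m → ℕ → A := a - b with hc
  have hcex : ∃ i : ℕ, ∃ j : Fin m, c j i ≠ 0 := by
    by_contra h
    push_neg at h
    exact hab (funext fun j => funext fun i => sub_eq_zero.mp (h i j))
  set n : ℕ := Nat.find hcex with hn
  obtain ⟨j₀, hj₀⟩ := Nat.find_spec hcex
  have hclt : ∀ i < n, ∀ j : Fin m, c j i = 0 := by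
    intro i hi j
    by_contra h
    exact Nat.find_min hcex hi ⟨j, h⟩
  have hcab : ∀ (j : Fin m) (i : ℕ), c j i = a j i - b j i := fun _ _ => rfl
  have hord : ordS c = (n : ℕ∞) := by
    refine le_antisymm (sInf_le ⟨j₀, n, hj₀, rfl⟩) (le_sInf ?_)
    rintro x ⟨j, i, hji, rfl⟩
    have : n ≤ i := Nat.find_le ⟨j, hji⟩
    exact_mod_cast this
  set e : ℕ := powAtMin 𝔫 N c with he
  have hce : ∀ j : Fin m, c j n ∈ 𝔫 ^ e := by
    intro j
    by_cases h : c j n = 0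
    · simp [h]
    · have h1 : e ≤ powIdx 𝔫 N (c j n) := Nat.sInf_le ⟨j, n, h, hord.symm, rfl⟩
      exact Ideal.pow_le_pow_right h1 (powIdx_spec hN h)
  -- the difference of images
  set D0 : ℕ → A := arcEval H a - arcEval H b with hD0
  have hD0ab : ∀ i, D0 i = arcEval H a i - arcEval H b i := fun _ => rfl
  have hDlt : ∀ i ≤ n, ∀ P : MvPolynomial (Fin m × ℕ) A, (∀ v ∈ P.vars, v.2 < i) →
      MvPolynomial.eval (fun v : Fin m × ℕ => a v.1 v.2) P =
      MvPolynomial.eval (fun v : Fin m × ℕ => b v.1 v.2) P := by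
    intro i hi P hP
    refine eval_eq_of_agree P _ _ fun v hv => ?_
    have := hclt v.2 (lt_of_lt_of_le (hP v hv) hi) v.1
    rw [hcab] at this
    exact sub_eq_zero.mp this
  have hDzero : ∀ i < n, D0 i = 0 := by
    intro i hi
    obtain ⟨P, Q, hPQ, hP, hQv, _⟩ := hsplit i
    have hQ' : ∀ v ∈ Q.vars, v.2 < i + 1 := fun v hv => by rw [hQv v hv]; omega
    have hP' : ∀ v ∈ P.vars, v.2 < i + 1 := fun v hv => (hP v hv).trans (Nat.lt_succ_self i)
    have hin : i + 1 ≤ n := hi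
    rw [hD0ab]
    unfold arcEval
    rw [hPQ, map_add, map_add, hDlt (i+1) hin P hP', hDlt (i+1) hin Q hQ']
    ring
  have hDn : D0 n ∈ 𝔫 ^ (e + 1) := by
    obtain ⟨P, Q, hPQ, hP, hQv, hQc⟩ := hsplit n
    have h1 : MvPolynomial.eval (fun v : Fin m × ℕ => a v.1 v.2) P =
        MvPolynomial.eval (fun v : Fin m × ℕ => b v.1 v.2) P :=
      hDlt n le_rfl P hP
    have h2 : MvPolynomial.eval (fun v : Fin m × ℕ => a v.1 v.2) Q -
        MvPolynomial.eval (fun v : Fin m × ℕ => b v.1 v.2) Q ∈ 𝔫 * 𝔫 ^ e := by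
      refine eval_sub_mem_aux Q 𝔫 (𝔫 ^ e) hQc _ _ fun v hv => ?_
      have : a v.1 v.2 - b v.1 v.2 = c v.1 n := by rw [hQv v hv]; rfl
      rw [this]
      exact hce v.1
    have heq : D0 n = MvPolynomial.eval (fun v : Fin m × ℕ => a v.1 v.2) Q -
        MvPolynomial.eval (fun v : Fin m × ℕ => b v.1 v.2) Q := by
      rw [hD0ab]
      unfold arcEval
      rw [hPQ, map_add, map_add, h1]
      ring
    rw [heq, pow_succ, mul_comm (𝔫 ^ e) 𝔫]
    exact h2
  set D : Fin 1 → ℕ → A := fun _ => D0 with hD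
  by_cases hDall : ∀ i : ℕ, D0 i = 0
  · left
    have : {N : ℕ∞ | ∃ (j : Fin 1) (i : ℕ), D j i ≠ 0 ∧ N = (i : ℕ∞)} = ∅ := by
      ext x
      simp only [Set.mem_setOf_eq, Set.mem_empty_iff_false, iff_false]
      rintro ⟨j, i, hji, rfl⟩
      exact hji (hDall i)
    show ordS c < ordS D
    rw [hord, ordS, this, sInf_empty]
    exact WithTop.coe_lt_top n
  · push_neg at hDall
    set n' : ℕ := Nat.find hDall with hn'
    have hn'spec : D0 n' ≠ 0 := Nat.find_spec hDall
    have hord' : ordS D = (n' : ℕ∞) := by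
      refine le_antisymm (sInf_le ⟨0, n', hn'spec, rfl⟩) (le_sInf ?_)
      rintro x ⟨j, i, hji, rfl⟩
      have : n' ≤ i := Nat.find_le hji
      exact_mod_cast this
    have hnn' : n ≤ n' := by
      by_contra h
      push_neg at h
      exact hn'spec (hDzero n' h)
    rcases lt_or_eq_of_le hnn' with hlt | heq
    · left
      show ordS c < ordS D
      rw [hord, hord']
      exact_mod_cast hlt
    · right
      constructor
      · show ordS c = ordS D
        rw [hord, hord', heq]
      · show powAtMin 𝔫 N c < powAtMin 𝔫 N D
        have hDn' : D0 n ≠ 0 := heq ▸ hn'spec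
        have hset : {e' : ℕ | ∃ (j : Fin 1) (i : ℕ), D j i ≠ 0 ∧ (i : ℕ∞) = ordS D ∧
            e' = powIdx 𝔫 N (D j i)} = {powIdx 𝔫 N (D0 n)} := by
          ext e'
          simp only [Set.mem_setOf_eq, Set.mem_singleton_iff]
          constructor
          · rintro ⟨j, i, hji, hiord, rfl⟩
            rw [hord', ← heq] at hiord
            have : i = n := by exact_mod_cast hiord
            subst this
            rfl
          · rintro rfl
            exact ⟨0, n, hDn', by rw [hord', heq], rfl⟩
        have : powAtMin 𝔫 N D = powIdx 𝔫 N (D0 n) := by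
          rw [powAtMin, hset, csInf_singleton]
        rw [this, ← he]
        have : e + 1 ≤ powIdx 𝔫 N (D0 n) := le_powIdx hN hDn' hDn
        omega
end
end

section
/- Division Theorem (existence and uniqueness of quotients and remainder): Let f_1,…,f_m ∈ k[[x]]^p be a monic standard basis of the submodule they generate, with in(f_i) = x^{(α^i, j_i)}. Let S = S_1 ⊎ … ⊎ S_m be a partition of the support of in(⟨f_1,…,f_m⟩) with S_i ⊆ supp(k[[x]]·in(f_i)). Then for every f ∈ k[[x]]^p there exist unique g_1,…,g_m ∈ k[[x]] and a unique h ∈ k[[x]]^p such that f = g_1 f_1 + … + g_m f_m + h, with supp(g_i) ⊆ p_1(S_i) − α^i for each i and supp(h) ⊆ (ℕⁿ × {1,…,p}) \ S. -/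
/- Division Theorem: existence and uniqueness of quotients and remainder. -/

noncomputable section

open MvPowerSeries

variable {k : Type} [Field k]

/-- Lexicographic comparison of multi-exponents. -/
def lexLt {n : ℕ} (α β : Fin n →₀ ℕ) : Prop :=
  ∃ i, α i < β i ∧ ∀ j, j < i → α j = β j

/-- The module order on the indices `(α, j)` of monomial vectors: first compare the
`L`-degrees, ties are broken lexicographically in `(α, j)`. -/
def modLt {n p : ℕ} (w : Fin n → ℝ) (x y : (Fin n →₀ ℕ) × Fin p) : Prop :=
  Lval w x.1 < Lval w y.1 ∨
    (Lval w x.1 = Lval w y.1 ∧ (lexLt x.1 y.1 ∨ (x.1 = y.1 ∧ x.2 < y.2)))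

/-- Support of a vector of power series. -/
def suppV {n p : ℕ} (a : Fin p → MvPowerSeries (Fin n) k) : Set ((Fin n →₀ ℕ) × Fin p) :=
  {ι | MvPowerSeries.coeff ι.1 (a ι.2) ≠ 0}

/-- `ι` is the initial index of `a`: it lies in the support and is minimal for the
module order. -/
def IsInitial {n p : ℕ} (w : Fin n → ℝ) (a : Fin p → MvPowerSeries (Fin n) k)
    (ι : (Fin n →₀ ℕ) × Fin p) : Prop :=
  ι ∈ suppV a ∧ ∀ κ ∈ suppV a, κ ≠ ι → modLt w ι κ

/-- The monomial vector `x^{(α,j)}`. -/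
def monVec {n p : ℕ} (ι : (Fin n →₀ ℕ) × Fin p) : Fin p → MvPowerSeries (Fin n) k :=
  fun j => if j = ι.2 then MvPowerSeries.monomial ι.1 1 else 0

/-- The initial module of a submodule `M ⊆ k[[x]]^p`: the module generated by the initial
monomial vectors of elements of `M`. -/
def initialModule {n p : ℕ} (w : Fin n → ℝ)
    (M : Submodule (MvPowerSeries (Fin n) k) (Fin p → MvPowerSeries (Fin n) k)) :
    Submodule (MvPowerSeries (Fin n) k) (Fin p → MvPowerSeries (Fin n) k) :=
  Submodule.span _ {v | ∃ a ∈ M, ∃ ι, IsInitial w a ι ∧ v = monVec ι}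

/-- The support of a monomial submodule: the set of indices of monomial vectors in it. -/
def suppSet {n p : ℕ}
    (N : Submodule (MvPowerSeries (Fin n) k) (Fin p → MvPowerSeries (Fin n) k)) :
    Set ((Fin n →₀ ℕ) × Fin p) :=
  {ι | monVec ι ∈ N}

section Lemmas
variable {n p : ℕ} (w : Fin n → ℝ)

lemma Lval_eq_sum (d : Fin n →₀ ℕ) : Lval w d = ∑ i, w i * (d i : ℝ) :=
  Finsupp.sum_fintype _ _ (fun i => by simp)

lemma Lval_add (a b : Fin n →₀ ℕ) : Lval w (a + b) = Lval w a + Lval w b := by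
  simp [Lval_eq_sum, Finsupp.add_apply, mul_add, Finset.sum_add_distrib]

lemma lexLt_irrefl {α : Fin n →₀ ℕ} : ¬ lexLt α α := by
  rintro ⟨i, h, -⟩; exact lt_irrefl _ h

lemma lexLt_trans {α β γ : Fin n →₀ ℕ} (h1 : lexLt α β) (h2 : lexLt β γ) : lexLt α γ := by
  obtain ⟨i, hi, hij⟩ := h1
  obtain ⟨i', hi', hij'⟩ := h2
  rcases lt_trichotomy i i' with h | h | h
  · exact ⟨i, lt_of_lt_of_eq hi (hij' i h), fun j hj => (hij j hj).trans (hij' j (hj.trans h))⟩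
  · subst h; exact ⟨i, hi.trans hi', fun j hj => (hij j hj).trans (hij' j hj)⟩
  · exact ⟨i', lt_of_eq_of_lt (hij i' h) hi', fun j hj => (hij j (hj.trans h)).trans (hij' j hj)⟩

lemma lexLt_total {α β : Fin n →₀ ℕ} (h : α ≠ β) : lexLt α β ∨ lexLt β α := by
  classical
  have hne : ∃ i, α i ≠ β i := by
    by_contra hc; push_neg at hc; exact h (Finsupp.ext hc)
  set s : Finset (Fin n) := Finset.univ.filter fun i => α i ≠ β i with hs
  have hsne : s.Nonempty := ⟨hne.choose, by simp [hs, hne.choose_spec]⟩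
  set i := s.min' hsne with hi
  have hmem : α i ≠ β i := by have := s.min'_mem hsne; simpa [hs] using this
  have hlow : ∀ j, j < i → α j = β j := by
    intro j hj
    by_contra hcj
    exact absurd (s.min'_le j (by simp [hs, hcj])) (not_le.mpr hj)
  rcases lt_or_gt_of_ne hmem with h' | h'
  · exact Or.inl ⟨i, h', hlow⟩
  · exact Or.inr ⟨i, h', fun j hj => (hlow j hj).symm⟩

lemma lexLt_add_left (γ : Fin n →₀ ℕ) {α β : Fin n →₀ ℕ} (h : lexLt α β) :
    lexLt (γ + α) (γ + β) := by
  obtain ⟨i, h1, h2⟩ := h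
  exact ⟨i, by simp only [Finsupp.add_apply]; exact Nat.add_lt_add_left h1 _,
    fun j hj => by simp only [Finsupp.add_apply, h2 j hj]⟩

lemma modLt_irrefl (x : (Fin n →₀ ℕ) × Fin p) : ¬ modLt w x x := by
  rintro (h | ⟨-, h | ⟨-, h⟩⟩)
  exacts [lt_irrefl _ h, lexLt_irrefl h, lt_irrefl _ h]

lemma modLt_trans {x y z : (Fin n →₀ ℕ) × Fin p} (hxy : modLt w x y) (hyz : modLt w y z) :
    modLt w x z := by
  rcases hxy with h1 | ⟨e1, h1⟩ <;> rcases hyz with h2 | ⟨e2, h2⟩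
  · exact Or.inl (h1.trans h2)
  · exact Or.inl (lt_of_lt_of_eq h1 e2)
  · exact Or.inl (lt_of_eq_of_lt e1 h2)
  · refine Or.inr ⟨e1.trans e2, ?_⟩
    rcases h1 with h1 | ⟨q1, r1⟩ <;> rcases h2 with h2 | ⟨q2, r2⟩
    · exact Or.inl (lexLt_trans h1 h2)
    · exact Or.inl (by rw [← q2]; exact h1)
    · exact Or.inl (by rw [q1]; exact h2)
    · exact Or.inr ⟨q1.trans q2, r1.trans r2⟩

lemma modLt_total {x y : (Fin n →₀ ℕ) × Fin p} (h : x ≠ y) : modLt w x y ∨ modLt w y x := by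
  rcases lt_trichotomy (Lval w x.1) (Lval w y.1) with hl | hl | hl
  · exact Or.inl (Or.inl hl)
  · by_cases h1 : x.1 = y.1
    · have h2 : x.2 ≠ y.2 := fun hc => h (Prod.ext h1 hc)
      rcases lt_or_gt_of_ne h2 with h2 | h2
      · exact Or.inl (Or.inr ⟨hl, Or.inr ⟨h1, h2⟩⟩)
      · exact Or.inr (Or.inr ⟨hl.symm, Or.inr ⟨h1.symm, h2⟩⟩)
    · rcases lexLt_total h1 with h2 | h2
      · exact Or.inl (Or.inr ⟨hl, Or.inl h2⟩)
      · exact Or.inr (Or.inr ⟨hl.symm, Or.inl h2⟩)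
  · exact Or.inr (Or.inl hl)

lemma modLt_add_left (γ : Fin n →₀ ℕ) {x y : (Fin n →₀ ℕ) × Fin p} (h : modLt w x y) :
    modLt w (γ + x.1, x.2) (γ + y.1, y.2) := by
  rcases h with h | ⟨e, h | ⟨q, r⟩⟩
  · exact Or.inl (by simp only [Lval_add]; linarith)
  · exact Or.inr ⟨by simp [Lval_add, e], Or.inl (lexLt_add_left γ h)⟩
  · exact Or.inr ⟨by simp [Lval_add, e], Or.inr ⟨by rw [q], r⟩⟩

lemma finite_Lval_le (hw : ∀ i, 0 < w i) (Cb : ℝ) :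
    {d : Fin n →₀ ℕ | Lval w d ≤ Cb}.Finite := by
  classical
  set N : ℕ := Finset.univ.sup fun i : Fin n => ⌈Cb / w i⌉₊ with hN
  refine Set.Finite.subset (Finset.Iic (Finsupp.equivFunOnFinite.symm fun _ => N)).finite_toSet ?_
  intro d hd
  simp only [Finset.coe_Iic, Set.mem_Iic]
  intro i
  have hterm : w i * (d i : ℝ) ≤ Lval w d := by
    rw [Lval_eq_sum]
    exact Finset.single_le_sum (fun j _ => mul_nonneg (hw j).le (Nat.cast_nonneg _))
      (Finset.mem_univ i)
  have h1 : (d i : ℝ) ≤ Cb / w i := (le_div_iff₀' (hw i)).mpr (hterm.trans hd)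
  have h2 : d i ≤ ⌈Cb / w i⌉₊ := by
    have := h1.trans (Nat.le_ceil (Cb / w i))
    exact_mod_cast this
  have h3 : d i ≤ N := h2.trans (Finset.le_sup (f := fun i => ⌈Cb / w i⌉₊) (Finset.mem_univ i))
  simpa using h3

lemma finite_seg (hw : ∀ i, 0 < w i) (κ : (Fin n →₀ ℕ) × Fin p) :
    {y : (Fin n →₀ ℕ) × Fin p | modLt w y κ}.Finite := by
  refine Set.Finite.subset ((finite_Lval_le w hw (Lval w κ.1)).prod Set.finite_univ) ?_
  rintro y (h | ⟨e, -⟩)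
  · exact ⟨le_of_lt h, trivial⟩
  · exact ⟨le_of_eq e, trivial⟩

lemma modLt_wf (hw : ∀ i, 0 < w i) : WellFounded (modLt w (p := p)) := by
  refine Subrelation.wf
    (r := InvImage (· < ·) (fun x => (finite_seg w hw x).toFinset.card)) ?_
    (InvImage.wf _ Nat.lt_wfRel.wf)
  intro x y hxy
  show (finite_seg w hw x).toFinset.card < (finite_seg w hw y).toFinset.card
  refine Finset.card_lt_card ?_
  rw [Finset.ssubset_iff_of_subset]
  · exact ⟨x, by simp [Set.Finite.mem_toFinset, hxy], by
      simp [Set.Finite.mem_toFinset]; exact modLt_irrefl w x⟩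
  · intro z hz
    simp only [Set.Finite.mem_toFinset, Set.mem_setOf_eq] at hz ⊢
    exact modLt_trans w hz hxy


end Lemmas

open scoped Classical in
lemma key_mul {n p : ℕ} (w : Fin n → ℝ)
    (fi : Fin p → MvPowerSeries (Fin n) k) (ιi : (Fin n →₀ ℕ) × Fin p)
    (hinit : IsInitial w fi ιi) (hmon : MvPowerSeries.coeff ιi.1 (fi ιi.2) = 1)
    (q : MvPowerSeries (Fin n) k) (κ : (Fin n →₀ ℕ) × Fin p) :
    MvPowerSeries.coeff κ.1 (q * fi κ.2) =
      (if ιi.2 = κ.2 ∧ ιi.1 ≤ κ.1 then MvPowerSeries.coeff (κ.1 - ιi.1) q else 0) +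
      ∑ bc ∈ Finset.HasAntidiagonal.antidiagonal κ.1,
        (if modLt w (bc.1 + ιi.1, ιi.2) κ then
          MvPowerSeries.coeff bc.1 q * MvPowerSeries.coeff bc.2 (fi κ.2) else 0) := by
  rw [MvPowerSeries.coeff_mul]
  have hterm : ∀ bc ∈ Finset.HasAntidiagonal.antidiagonal κ.1,
      MvPowerSeries.coeff bc.1 q * MvPowerSeries.coeff bc.2 (fi κ.2) =
        (if modLt w (bc.1 + ιi.1, ιi.2) κ then
          MvPowerSeries.coeff bc.1 q * MvPowerSeries.coeff bc.2 (fi κ.2) else 0)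
        + (if (bc.1 + ιi.1, ιi.2) = κ then MvPowerSeries.coeff bc.1 q else 0) := by
    intro bc hbc
    rw [Finset.HasAntidiagonal.mem_antidiagonal] at hbc
    by_cases heq : (bc.1 + ιi.1, ιi.2) = κ
    · have h2 : bc.2 = ιi.1 := by
        have : bc.1 + bc.2 = bc.1 + ιi.1 := by rw [hbc]; exact ((Prod.ext_iff.mp heq).1).symm
        exact add_left_cancel this
      have hj : ιi.2 = κ.2 := (Prod.ext_iff.mp heq).2
      rw [if_pos heq, if_neg (by rw [heq]; exact modLt_irrefl w κ), h2, ← hj, hmon, mul_one,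
        zero_add]
    · rw [if_neg heq, add_zero]
      by_cases hlt : modLt w (bc.1 + ιi.1, ιi.2) κ
      · rw [if_pos hlt]
      · rw [if_neg hlt]
        have hz : MvPowerSeries.coeff bc.2 (fi κ.2) = 0 := by
          by_contra hnz
          have hsup : (bc.2, κ.2) ∈ suppV fi := hnz
          by_cases hι : (bc.2, κ.2) = ιi
          · apply heq
            have h1 : bc.2 = ιi.1 := (Prod.ext_iff.mp hι).1
            have h2 : κ.2 = ιi.2 := (Prod.ext_iff.mp hι).2
            rw [← h1, ← h2, hbc]
          · refine hlt ?_
            have hm := modLt_add_left w bc.1 (hinit.2 _ hsup hι)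
            rwa [hbc] at hm
        rw [hz, mul_zero]
  rw [Finset.sum_congr rfl hterm, Finset.sum_add_distrib, add_comm]
  congr 1
  by_cases hd : ιi.2 = κ.2 ∧ ιi.1 ≤ κ.1
  · rw [if_pos hd]
    have hb0 : ((κ.1 - ιi.1 : Fin n →₀ ℕ), ιi.1) ∈ Finset.HasAntidiagonal.antidiagonal κ.1 := by
      rw [Finset.HasAntidiagonal.mem_antidiagonal]; exact tsub_add_cancel_of_le hd.2
    refine (Finset.sum_eq_single_of_mem _ hb0 ?_).trans ?_
    · intro bc hbc hne
      rw [if_neg]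
      intro heq
      apply hne
      rw [Finset.HasAntidiagonal.mem_antidiagonal] at hbc
      have h1 : bc.1 + ιi.1 = κ.1 := (Prod.ext_iff.mp heq).1
      have h2 : bc.2 = ιi.1 := add_left_cancel (by rw [hbc, ← h1])
      exact Prod.ext (eq_tsub_of_add_eq h1) h2
    · rw [if_pos]
      rw [tsub_add_cancel_of_le hd.2]
      exact Prod.ext rfl hd.1
  · rw [if_neg hd, Finset.sum_eq_zero]
    intro bc hbc
    rw [if_neg]
    intro heq
    exact hd ⟨(Prod.ext_iff.mp heq).2,
      le_trans le_add_self (le_of_eq ((Prod.ext_iff.mp heq).1))⟩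

/-- **Division Theorem (existence and uniqueness of quotients and remainder).**
Let `f_1,…,f_m ∈ k[[x]]^p` be a monic standard basis with `in(f_i) = x^{(α^i,j_i)}` and let
`S = S_1 ⊎ … ⊎ S_m` be a partition of the support of the initial module, with
`S_i ⊆ supp(k[[x]]·in(f_i))`.  Then every `f ∈ k[[x]]^p` has unique quotients
`g_1,…,g_m ∈ k[[x]]` and remainder `h ∈ k[[x]]^p` with `f = Σ g_i f_i + h`,
`supp(g_i) ⊆ p_1(S_i) − α^i` and `supp(h) ∩ S = ∅`. -/
theorem division_theorem_existence_uniqueness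
    [CharZero k] {n p m : ℕ}
    (w : Fin n → ℝ) (hw : ∀ i, 0 < w i)
    (f : Fin m → Fin p → MvPowerSeries (Fin n) k)
    (ι : Fin m → (Fin n →₀ ℕ) × Fin p)
    (hinit : ∀ i, IsInitial w (f i) (ι i))
    (hmonic : ∀ i, MvPowerSeries.coeff (ι i).1 (f i (ι i).2) = 1)
    (hstd : initialModule w (Submodule.span _ (Set.range f)) =
      Submodule.span _ {v | ∃ i, v = monVec (ι i)})
    (S : Fin m → Set ((Fin n →₀ ℕ) × Fin p))
    (hScover : (⋃ i, S i) = suppSet (initialModule w (Submodule.span _ (Set.range f))))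
    (hSdisj : ∀ i i', i ≠ i' → Disjoint (S i) (S i'))
    (hSsub : ∀ i, S i ⊆ {κ | κ.2 = (ι i).2 ∧ (ι i).1 ≤ κ.1}) :
    ∀ F : Fin p → MvPowerSeries (Fin n) k,
      ∃! gh : (Fin m → MvPowerSeries (Fin n) k) × (Fin p → MvPowerSeries (Fin n) k),
        F = (∑ i, gh.1 i • f i) + gh.2 ∧
        (∀ i (β : Fin n →₀ ℕ), MvPowerSeries.coeff β (gh.1 i) ≠ 0 →
          ∃ j, (β + (ι i).1, j) ∈ S i) ∧
        (∀ κ ∈ suppV gh.2, κ ∉ ⋃ i, S i) := by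
  classical
  intro F
  have wf : WellFounded (modLt w (p := p)) := modLt_wf w hw
  -- uniqueness, proved first for arbitrary pairs of solutions
  have huniq : ∀ a b : (Fin m → MvPowerSeries (Fin n) k) × (Fin p → MvPowerSeries (Fin n) k),
      (F = (∑ i, a.1 i • f i) + a.2 ∧
        (∀ i (β : Fin n →₀ ℕ), MvPowerSeries.coeff β (a.1 i) ≠ 0 →
          ∃ j, (β + (ι i).1, j) ∈ S i) ∧
        (∀ κ ∈ suppV a.2, κ ∉ ⋃ i, S i)) →
      (F = (∑ i, b.1 i • f i) + b.2 ∧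
        (∀ i (β : Fin n →₀ ℕ), MvPowerSeries.coeff β (b.1 i) ≠ 0 →
          ∃ j, (β + (ι i).1, j) ∈ S i) ∧
        (∀ κ ∈ suppV b.2, κ ∉ ⋃ i, S i)) → a = b := by
    rintro ⟨g1, h1⟩ ⟨g2, h2⟩ ⟨ha1, ha2, ha3⟩ ⟨hb1, hb2, hb3⟩
    set G : Fin m → MvPowerSeries (Fin n) k := fun i => g1 i - g2 i with hG
    set H : Fin p → MvPowerSeries (Fin n) k := fun j => h1 j - h2 j with hH
    have hzero : ∀ κ : (Fin n →₀ ℕ) × Fin p,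
        ∑ i : Fin m, MvPowerSeries.coeff κ.1 (G i * f i κ.2) +
          MvPowerSeries.coeff κ.1 (H κ.2) = 0 := by
      intro κ
      have e : (∑ i, g1 i • f i) + h1 = (∑ i, g2 i • f i) + h2 := by rw [← ha1, ← hb1]
      have e' := congrArg (fun Φ => MvPowerSeries.coeff κ.1 (Φ κ.2)) e
      simp only [Pi.add_apply, Finset.sum_apply, Pi.smul_apply, smul_eq_mul, map_add,
        map_sum] at e'
      have eG : ∀ i, MvPowerSeries.coeff κ.1 (G i * f i κ.2) =
          MvPowerSeries.coeff κ.1 (g1 i * f i κ.2) -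
            MvPowerSeries.coeff κ.1 (g2 i * f i κ.2) := by
        intro i
        rw [show G i * f i κ.2 = g1 i * f i κ.2 - g2 i * f i κ.2 by rw [hG, sub_mul],
          map_sub]
      have eH : MvPowerSeries.coeff κ.1 (H κ.2) =
          MvPowerSeries.coeff κ.1 (h1 κ.2) - MvPowerSeries.coeff κ.1 (h2 κ.2) := by
        rw [hH, map_sub]
      rw [Finset.sum_congr rfl fun i _ => eG i, Finset.sum_sub_distrib, eH]
      linear_combination e'
    have sG : ∀ i β, MvPowerSeries.coeff β (G i) ≠ 0 → (β + (ι i).1, (ι i).2) ∈ S i := by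
      intro i β hne
      have hone : MvPowerSeries.coeff β (g1 i) ≠ 0 ∨ MvPowerSeries.coeff β (g2 i) ≠ 0 := by
        by_contra hcc
        push_neg at hcc
        apply hne
        rw [hG, map_sub, hcc.1, hcc.2, sub_zero]
      obtain ⟨j, hj⟩ : ∃ j, (β + (ι i).1, j) ∈ S i := hone.elim (ha2 i β) (hb2 i β)
      have hj2 : j = (ι i).2 := (hSsub i hj).1
      rw [← hj2]
      exact hj
    have sH : ∀ κ : (Fin n →₀ ℕ) × Fin p,
        MvPowerSeries.coeff κ.1 (H κ.2) ≠ 0 → κ ∉ ⋃ i, S i := by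
      intro κ hne
      have hone : MvPowerSeries.coeff κ.1 (h1 κ.2) ≠ 0 ∨
          MvPowerSeries.coeff κ.1 (h2 κ.2) ≠ 0 := by
        by_contra hcc
        push_neg at hcc
        apply hne
        rw [hH, map_sub, hcc.1, hcc.2, sub_zero]
      exact hone.elim (fun hx => ha3 κ hx) (fun hx => hb3 κ hx)
    have hGH : (∀ i, G i = 0) ∧ (∀ j, H j = 0) := by
      by_contra hcon
      have hAne : {κ : (Fin n →₀ ℕ) × Fin p |
          (∃ i, (ι i).2 = κ.2 ∧ (ι i).1 ≤ κ.1 ∧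
            MvPowerSeries.coeff (κ.1 - (ι i).1) (G i) ≠ 0) ∨
          MvPowerSeries.coeff κ.1 (H κ.2) ≠ 0}.Nonempty := by
        rw [not_and_or] at hcon
        rcases hcon with hc | hc
        · push_neg at hc
          obtain ⟨i, hi⟩ := hc
          obtain ⟨β, hβ⟩ : ∃ β, MvPowerSeries.coeff β (G i) ≠ 0 := by
            by_contra hcc
            push_neg at hcc
            exact hi (MvPowerSeries.ext fun β => by rw [hcc β, map_zero])
          exact ⟨(β + (ι i).1, (ι i).2),
            Or.inl ⟨i, rfl, le_add_self, by rwa [add_tsub_cancel_right]⟩⟩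
        · push_neg at hc
          obtain ⟨j, hj⟩ := hc
          obtain ⟨γ, hγ⟩ : ∃ γ, MvPowerSeries.coeff γ (H j) ≠ 0 := by
            by_contra hcc
            push_neg at hcc
            exact hj (MvPowerSeries.ext fun γ => by rw [hcc γ, map_zero])
          exact ⟨(γ, j), Or.inr hγ⟩
      obtain ⟨κ0, hκ0, hmin⟩ := wf.has_min _ hAne
      have hz := hzero κ0
      have e1 : ∀ i : Fin m, MvPowerSeries.coeff κ0.1 (G i * f i κ0.2) =
          (if (ι i).2 = κ0.2 ∧ (ι i).1 ≤ κ0.1 then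
            MvPowerSeries.coeff (κ0.1 - (ι i).1) (G i) else 0) := by
        intro i
        rw [key_mul w (f i) (ι i) (hinit i) (hmonic i) (G i) κ0]
        rw [Finset.sum_eq_zero, add_zero]
        intro bc _
        by_cases hlt : modLt w (bc.1 + (ι i).1, (ι i).2) κ0
        · rw [if_pos hlt]
          by_cases hq : MvPowerSeries.coeff bc.1 (G i) = 0
          · rw [hq, zero_mul]
          · exact absurd hlt (hmin (bc.1 + (ι i).1, (ι i).2)
              (Or.inl ⟨i, rfl, le_add_self, by rwa [add_tsub_cancel_right]⟩))
        · rw [if_neg hlt]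
      rw [Finset.sum_congr rfl fun i _ => e1 i] at hz
      rcases hκ0 with ⟨i0, hj0, hle0, hnz0⟩ | hnz0
      · have hκS : κ0 ∈ S i0 := by
          have hmem := sG i0 (κ0.1 - (ι i0).1) hnz0
          have heq : ((κ0.1 - (ι i0).1) + (ι i0).1, (ι i0).2) = κ0 :=
            Prod.ext (tsub_add_cancel_of_le hle0) hj0
          rwa [heq] at hmem
        have hH0 : MvPowerSeries.coeff κ0.1 (H κ0.2) = 0 := by
          by_contra hcc
          exact (sH κ0 hcc) (Set.mem_iUnion.mpr ⟨i0, hκS⟩)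
        have hsum : ∑ i : Fin m, (if (ι i).2 = κ0.2 ∧ (ι i).1 ≤ κ0.1 then
            MvPowerSeries.coeff (κ0.1 - (ι i).1) (G i) else 0) =
            MvPowerSeries.coeff (κ0.1 - (ι i0).1) (G i0) := by
          refine (Finset.sum_eq_single_of_mem i0 (Finset.mem_univ _) ?_).trans
            (if_pos ⟨hj0, hle0⟩)
          intro i _ hne'
          by_cases hdi : (ι i).2 = κ0.2 ∧ (ι i).1 ≤ κ0.1
          · rw [if_pos hdi]
            by_cases hq : MvPowerSeries.coeff (κ0.1 - (ι i).1) (G i) = 0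
            · exact hq
            · exfalso
              have hmem := sG i _ hq
              have heq : ((κ0.1 - (ι i).1) + (ι i).1, (ι i).2) = κ0 :=
                Prod.ext (tsub_add_cancel_of_le hdi.2) hdi.1
              rw [heq] at hmem
              exact Set.disjoint_left.mp (hSdisj i i0 hne') hmem hκS
          · rw [if_neg hdi]
        rw [hsum, hH0, add_zero] at hz
        exact hnz0 hz
      · have hκ0nS : κ0 ∉ ⋃ i, S i := sH κ0 hnz0
        have hsum : ∑ i : Fin m, (if (ι i).2 = κ0.2 ∧ (ι i).1 ≤ κ0.1 then
            MvPowerSeries.coeff (κ0.1 - (ι i).1) (G i) else 0) = 0 := by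
          refine Finset.sum_eq_zero fun i _ => ?_
          by_cases hdi : (ι i).2 = κ0.2 ∧ (ι i).1 ≤ κ0.1
          · rw [if_pos hdi]
            by_cases hq : MvPowerSeries.coeff (κ0.1 - (ι i).1) (G i) = 0
            · exact hq
            · exfalso
              have hmem := sG i _ hq
              have heq : ((κ0.1 - (ι i).1) + (ι i).1, (ι i).2) = κ0 :=
                Prod.ext (tsub_add_cancel_of_le hdi.2) hdi.1
              rw [heq] at hmem
              exact hκ0nS (Set.mem_iUnion.mpr ⟨i, hmem⟩)
          · rw [if_neg hdi]
        rw [hsum, zero_add] at hz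
        exact hnz0 hz
    have hg12 : g1 = g2 := funext fun i => sub_eq_zero.mp (hGH.1 i)
    have hh12 : h1 = h2 := funext fun j => sub_eq_zero.mp (hGH.2 j)
    rw [Prod.mk.injEq]
    exact ⟨hg12, hh12⟩
  -- existence
  let C : (Fin n →₀ ℕ) × Fin p → k := wf.fix (fun κ rec =>
    MvPowerSeries.coeff κ.1 (F κ.2) -
      ∑ i : Fin m, ∑ bc ∈ Finset.HasAntidiagonal.antidiagonal κ.1,
        if hcond : (bc.1 + (ι i).1, (ι i).2) ∈ S i ∧
            modLt w (bc.1 + (ι i).1, (ι i).2) κ then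
          rec (bc.1 + (ι i).1, (ι i).2) hcond.2 * MvPowerSeries.coeff bc.2 (f i κ.2)
        else 0)
  have hC : ∀ κ : (Fin n →₀ ℕ) × Fin p, C κ = MvPowerSeries.coeff κ.1 (F κ.2) -
      ∑ i : Fin m, ∑ bc ∈ Finset.HasAntidiagonal.antidiagonal κ.1,
        (if hcond : (bc.1 + (ι i).1, (ι i).2) ∈ S i ∧
            modLt w (bc.1 + (ι i).1, (ι i).2) κ then
          C (bc.1 + (ι i).1, (ι i).2) * MvPowerSeries.coeff bc.2 (f i κ.2)
        else 0) :=
    fun κ => WellFounded.fix_eq wf _ κ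
  let g : Fin m → MvPowerSeries (Fin n) k := fun i =>
    (fun β => if (β + (ι i).1, (ι i).2) ∈ S i then C (β + (ι i).1, (ι i).2) else 0 :
      (Fin n →₀ ℕ) → k)
  have hg : ∀ i β, MvPowerSeries.coeff β (g i) =
      if (β + (ι i).1, (ι i).2) ∈ S i then C (β + (ι i).1, (ι i).2) else 0 :=
    fun i β => rfl
  let h : Fin p → MvPowerSeries (Fin n) k := fun j =>
    (fun γ => if ((γ, j) : (Fin n →₀ ℕ) × Fin p) ∈ ⋃ i, S i then 0 else C (γ, j) :
      (Fin n →₀ ℕ) → k)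
  have hh : ∀ κ : (Fin n →₀ ℕ) × Fin p,
      MvPowerSeries.coeff κ.1 (h κ.2) = if κ ∈ ⋃ i, S i then 0 else C κ :=
    fun κ => rfl
  have hmain : F = (∑ i, g i • f i) + h := by
    funext j
    apply MvPowerSeries.ext
    intro γ
    have expand : MvPowerSeries.coeff γ (((∑ i, g i • f i) + h) j)
        = ∑ i : Fin m, MvPowerSeries.coeff γ (g i * f i j) +
          MvPowerSeries.coeff γ (h j) := by
      simp [Finset.sum_apply, Pi.add_apply, Pi.smul_apply, smul_eq_mul, map_sum]
    rw [expand]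
    have hD : ∀ i : Fin m, (if (ι i).2 = (γ, j).2 ∧ (ι i).1 ≤ (γ, j).1 then
        MvPowerSeries.coeff ((γ, j).1 - (ι i).1) (g i) else 0) =
        (if ((γ, j) : (Fin n →₀ ℕ) × Fin p) ∈ S i then C (γ, j) else 0) := by
      intro i
      by_cases hd : (ι i).2 = (γ, j).2 ∧ (ι i).1 ≤ (γ, j).1
      · rw [if_pos hd, hg]
        have heq : ((γ - (ι i).1) + (ι i).1, (ι i).2) = ((γ, j) : (Fin n →₀ ℕ) × Fin p) :=
          Prod.ext (tsub_add_cancel_of_le hd.2) hd.1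
        rw [heq]
      · rw [if_neg hd, if_neg (fun hk => hd ⟨(hSsub i hk).1.symm, (hSsub i hk).2⟩)]
    have hTail : ∀ i : Fin m, ∑ bc ∈ Finset.HasAntidiagonal.antidiagonal γ,
        (if modLt w (bc.1 + (ι i).1, (ι i).2) (γ, j) then
          MvPowerSeries.coeff bc.1 (g i) * MvPowerSeries.coeff bc.2 (f i j) else 0)
        = ∑ bc ∈ Finset.HasAntidiagonal.antidiagonal γ,
        (if hcond : (bc.1 + (ι i).1, (ι i).2) ∈ S i ∧
            modLt w (bc.1 + (ι i).1, (ι i).2) (γ, j) then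
          C (bc.1 + (ι i).1, (ι i).2) * MvPowerSeries.coeff bc.2 (f i j) else 0) := by
      intro i
      refine Finset.sum_congr rfl fun bc _ => ?_
      rw [hg]
      by_cases h1 : (bc.1 + (ι i).1, (ι i).2) ∈ S i <;>
        by_cases h2 : modLt w (bc.1 + (ι i).1, (ι i).2) (γ, j) <;>
        simp [h1, h2]
    have e1 : ∀ i : Fin m, MvPowerSeries.coeff γ (g i * f i j) =
        (if ((γ, j) : (Fin n →₀ ℕ) × Fin p) ∈ S i then C (γ, j) else 0) +
        ∑ bc ∈ Finset.HasAntidiagonal.antidiagonal γ,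
          (if hcond : (bc.1 + (ι i).1, (ι i).2) ∈ S i ∧
              modLt w (bc.1 + (ι i).1, (ι i).2) (γ, j) then
            C (bc.1 + (ι i).1, (ι i).2) * MvPowerSeries.coeff bc.2 (f i j) else 0) := by
      intro i
      have := key_mul w (f i) (ι i) (hinit i) (hmonic i) (g i) (γ, j)
      rw [this, hD i, hTail i]
    have hDsum : ∑ i : Fin m,
        (if ((γ, j) : (Fin n →₀ ℕ) × Fin p) ∈ S i then C (γ, j) else 0) +
        MvPowerSeries.coeff γ (h j) = C (γ, j) := by
      have hhj : MvPowerSeries.coeff γ (h j) =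
          if ((γ, j) : (Fin n →₀ ℕ) × Fin p) ∈ ⋃ i, S i then 0 else C (γ, j) := hh (γ, j)
      rw [hhj]
      by_cases hcup : ((γ, j) : (Fin n →₀ ℕ) × Fin p) ∈ ⋃ i, S i
      · obtain ⟨i0, hi0⟩ : ∃ i0, ((γ, j) : (Fin n →₀ ℕ) × Fin p) ∈ S i0 := by
          simpa using hcup
        rw [if_pos hcup, add_zero]
        refine (Finset.sum_eq_single_of_mem i0 (Finset.mem_univ _) ?_).trans (if_pos hi0)
        intro i _ hne
        exact if_neg (fun hk => Set.disjoint_left.mp (hSdisj i i0 hne) hk hi0)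
      · rw [if_neg hcup, Finset.sum_eq_zero, zero_add]
        intro i _
        exact if_neg (fun hk => hcup (Set.mem_iUnion.mpr ⟨i, hk⟩))
    rw [Finset.sum_congr rfl fun i _ => e1 i, Finset.sum_add_distrib]
    have hCγ := hC (γ, j)
    dsimp only at hCγ
    linear_combination -hDsum - hCγ
  have hsupp1 : ∀ i (β : Fin n →₀ ℕ), MvPowerSeries.coeff β (g i) ≠ 0 →
      ∃ j, (β + (ι i).1, j) ∈ S i := by
    intro i β hne
    rw [hg] at hne
    by_cases hk : (β + (ι i).1, (ι i).2) ∈ S i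
    · exact ⟨(ι i).2, hk⟩
    · exact absurd (if_neg hk) hne
  have hsupp2 : ∀ κ ∈ suppV h, κ ∉ ⋃ i, S i := by
    intro κ hκ hcup
    have := hh κ
    rw [if_pos hcup] at this
    exact hκ this
  exact ⟨(g, h), ⟨hmain, hsupp1, hsupp2⟩,
    fun y hy => huniq y (g, h) hy ⟨hmain, hsupp1, hsupp2⟩⟩
end
end

section
/- Canonical form for textile linear maps on arc space: Every textile linear map ℓ : A → A (equivalently, every ℕ²-matrix (ℓ_{ij})_{i,j∈ℕ} over k each of whose rows has only finitely many nonzero entries) is equivalent to a textile linear map in canonical form: there exist invertible textile linear maps P, Q : A → A (with textile linear inverses) such that the matrix of P∘ℓ∘Q has at most one nonzero entry in each row and at most one nonzero entry in each column. -/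
/- Canonical form for textile linear maps on arc space. -/

noncomputable section

/-- An `ℕ²`-matrix is row-finite if every row has finitely many nonzero entries; such
matrices correspond exactly to textile linear maps `A → A` on the arc space `A = k^ℕ`. -/
def RowFinite {k : Type} [Field k] (M : ℕ → ℕ → k) : Prop :=
  ∀ i, {j | M i j ≠ 0}.Finite

/-- The textile linear map associated to a row-finite `ℕ²`-matrix. -/
def mApply {k : Type} [Field k] (M : ℕ → ℕ → k) (a : ℕ → k) : ℕ → k :=
  fun i => ∑ᶠ j, M i j * a j

/-- A matrix is in canonical form if every row and every column contains at most one
nonzero entry. -/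
def CanonicalForm {k : Type} [Field k] (N : ℕ → ℕ → k) : Prop :=
  (∀ i j j', N i j ≠ 0 → N i j' ≠ 0 → j = j') ∧
  (∀ j i i', N i j ≠ 0 → N i' j ≠ 0 → i = i')

namespace Canon

open Classical

variable {k : Type} [Field k]

def mul (A B : ℕ → ℕ → k) : ℕ → ℕ → k := fun i j => ∑ᶠ s, A i s * B s j

def one : ℕ → ℕ → k := fun i j => if i = j then (1 : k) else 0

def LT (A : ℕ → ℕ → k) : Prop := ∀ ⦃i j⦄, i < j → A i j = 0

lemma finsum_eq_sum' (f : ℕ → k) (s : Finset ℕ) (h : ∀ j, j ∉ s → f j = 0) :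
    ∑ᶠ j, f j = ∑ j ∈ s, f j :=
  finsum_eq_sum_of_support_subset f (fun x hx => by
    by_contra hxs; exact hx (h x hxs))

lemma mul_rowsupp (A B : ℕ → ℕ → k) (i j : ℕ) (s : Finset ℕ)
    (hs : ∀ t, t ∉ s → A i t = 0) :
    mul A B i j = ∑ t ∈ s, A i t * B t j :=
  finsum_eq_sum' _ s (fun t ht => by rw [hs t ht, zero_mul])

lemma mul_colsupp (A B : ℕ → ℕ → k) (i j : ℕ) (s : Finset ℕ)
    (hs : ∀ t, t ∉ s → B t j = 0) :
    mul A B i j = ∑ t ∈ s, A i t * B t j :=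
  finsum_eq_sum' _ s (fun t ht => by rw [hs t ht, mul_zero])

lemma one_mul' (A : ℕ → ℕ → k) : mul one A = A := by
  funext i j
  have : mul one A i j = ∑ᶠ s, one i s * A s j := rfl
  rw [this, finsum_eq_single _ i (fun s hs => by
    simp [one, Ne.symm hs])]
  simp [one]

lemma mul_one' (A : ℕ → ℕ → k) : mul A one = A := by
  funext i j
  have : mul A one i j = ∑ᶠ s, A i s * one s j := rfl
  rw [this, finsum_eq_single _ j (fun s hs => by simp [one, hs])]
  simp [one]

lemma rowFinite_mul {A B : ℕ → ℕ → k} (hA : RowFinite A) (hB : RowFinite B) :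
    RowFinite (mul A B) := by
  intro i
  apply Set.Finite.subset ((hA i).biUnion (fun s _ => hB s))
  intro j hj
  simp only [Set.mem_setOf_eq] at hj
  by_contra hmem
  apply hj
  have : ∀ s, A i s * B s j = 0 := by
    intro s
    by_cases hs : A i s = 0
    · rw [hs, zero_mul]
    · by_cases hb : B s j = 0
      · rw [hb, mul_zero]
      · exact absurd (Set.mem_biUnion (show s ∈ {t | A i t ≠ 0} from hs) hb) hmem
  exact finsum_eq_zero_of_forall_eq_zero this

lemma mul_assoc' {A B : ℕ → ℕ → k} (C : ℕ → ℕ → k) (hA : RowFinite A) (hB : RowFinite B) :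
    mul (mul A B) C = mul A (mul B C) := by
  funext i j
  set sA := (hA i).toFinset with hsA
  set sB := sA.biUnion (fun t => (hB t).toFinset) with hsB
  have hAmem : ∀ t, t ∉ sA → A i t = 0 := by
    intro t ht; by_contra h; exact ht (by simp [hsA, Set.Finite.mem_toFinset]; exact h)
  have hBmem : ∀ t ∈ sA, ∀ u, u ∉ sB → B t u = 0 := by
    intro t ht u hu; by_contra h
    exact hu (Finset.mem_biUnion.2 ⟨t, ht, by simp [Set.Finite.mem_toFinset]; exact h⟩)
  have lhs : mul (mul A B) C i j = ∑ u ∈ sB, (∑ t ∈ sA, A i t * B t u) * C u j := by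
    rw [mul_rowsupp (mul A B) C i j sB]
    · apply Finset.sum_congr rfl
      intro u _
      rw [mul_rowsupp A B i u sA hAmem]
    · intro u hu
      rw [mul_rowsupp A B i u sA hAmem]
      apply Finset.sum_eq_zero
      intro t ht
      rw [hBmem t ht u hu, mul_zero]
  have rhs : mul A (mul B C) i j = ∑ t ∈ sA, A i t * (∑ u ∈ sB, B t u * C u j) := by
    rw [mul_rowsupp A (mul B C) i j sA hAmem]
    apply Finset.sum_congr rfl
    intro t ht
    congr 1
    exact mul_rowsupp B C t j sB (hBmem t ht)
  rw [lhs, rhs]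
  simp_rw [Finset.sum_mul, Finset.mul_sum, mul_assoc]
  exact Finset.sum_comm

lemma mApply_mul {A B : ℕ → ℕ → k} (hA : RowFinite A) (hB : RowFinite B) (a : ℕ → k) :
    mApply A (mApply B a) = mApply (mul A B) a := by
  funext i
  set sA := (hA i).toFinset with hsA
  set sB := sA.biUnion (fun t => (hB t).toFinset) with hsB
  have hAmem : ∀ t, t ∉ sA → A i t = 0 := by
    intro t ht; by_contra h; exact ht (by simp [hsA, Set.Finite.mem_toFinset]; exact h)
  have hBmem : ∀ t ∈ sA, ∀ u, u ∉ sB → B t u = 0 := by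
    intro t ht u hu; by_contra h
    exact hu (Finset.mem_biUnion.2 ⟨t, ht, by simp [Set.Finite.mem_toFinset]; exact h⟩)
  have lhs : mApply A (mApply B a) i = ∑ t ∈ sA, A i t * (∑ u ∈ sB, B t u * a u) := by
    rw [show mApply A (mApply B a) i = ∑ᶠ t, A i t * mApply B a t from rfl,
      finsum_eq_sum' _ sA (fun t ht => by rw [hAmem t ht, zero_mul])]
    apply Finset.sum_congr rfl
    intro t ht
    congr 1
    exact finsum_eq_sum' _ sB (fun u hu => by rw [hBmem t ht u hu, zero_mul])
  have rhs : mApply (mul A B) a i = ∑ u ∈ sB, (∑ t ∈ sA, A i t * B t u) * a u := by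
    rw [show mApply (mul A B) a i = ∑ᶠ u, mul A B i u * a u from rfl,
      finsum_eq_sum' _ sB (fun u hu => by
        rw [mul_rowsupp A B i u sA hAmem]
        rw [Finset.sum_eq_zero (fun t ht => by rw [hBmem t ht u hu, mul_zero]), zero_mul])]
    apply Finset.sum_congr rfl
    intro u _
    rw [mul_rowsupp A B i u sA hAmem]
  rw [lhs, rhs]
  simp_rw [Finset.mul_sum, Finset.sum_mul, mul_assoc]
  exact Finset.sum_comm

lemma mApply_one (a : ℕ → k) : mApply one a = a := by
  funext i
  rw [show mApply one a i = ∑ᶠ j, one i j * a j from rfl,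
    finsum_eq_single _ i (fun s hs => by simp [one, Ne.symm hs])]
  simp [one]

lemma LT.rowFinite {A : ℕ → ℕ → k} (h : LT A) : RowFinite A := by
  intro i
  apply Set.Finite.subset (Set.finite_Iic i)
  intro j hj
  simp only [Set.mem_setOf_eq] at hj
  by_contra hji
  simp only [Set.mem_Iic, not_le] at hji
  exact hj (h hji)

lemma LT_one : LT (one : ℕ → ℕ → k) := by
  intro i j hij; simp only [one, if_neg (show ¬ i = j by omega)]

lemma LT_mul {A B : ℕ → ℕ → k} (hA : LT A) (hB : LT B) : LT (mul A B) := by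
  intro i j hij
  apply finsum_eq_zero_of_forall_eq_zero
  intro s
  rcases le_or_gt s i with h | h
  · rw [hB (lt_of_le_of_lt h hij), mul_zero]
  · rw [hA h, zero_mul]


/-! ### Elimination step matrices -/

def ZeroRow (A : ℕ → ℕ → k) (n : ℕ) : Prop := ∀ j, A n j = 0

def piv (A : ℕ → ℕ → k) (n : ℕ) : ℕ :=
  if h : {j | A n j ≠ 0}.Finite ∧ {j | A n j ≠ 0}.Nonempty
  then h.1.toFinset.max' ((Set.Finite.toFinset_nonempty h.1).2 h.2)
  else 0

lemma piv_spec {A : ℕ → ℕ → k} {n : ℕ} (hfin : {j | A n j ≠ 0}.Finite)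
    (hne : ¬ ZeroRow A n) :
    A n (piv A n) ≠ 0 ∧ ∀ j, piv A n < j → A n j = 0 := by
  have hne' : {j | A n j ≠ 0}.Nonempty := by
    rw [ZeroRow] at hne; push_neg at hne
    obtain ⟨j, hj⟩ := hne; exact ⟨j, hj⟩
  rw [piv, dif_pos ⟨hfin, hne'⟩]
  constructor
  · have := hfin.toFinset.max'_mem ((Set.Finite.toFinset_nonempty hfin).2 hne')
    rw [Set.Finite.mem_toFinset] at this
    exact this
  · intro j hj
    by_contra h
    have : j ∈ hfin.toFinset := by rw [Set.Finite.mem_toFinset]; exact h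
    exact absurd (Finset.le_max' _ j this) (by omega)

def ccoef (A : ℕ → ℕ → k) (n j : ℕ) : k :=
  if j = piv A n then 0 else A n j / A n (piv A n)

def Qstep (A : ℕ → ℕ → k) (n : ℕ) : ℕ → ℕ → k :=
  fun i j => one i j - if i = piv A n then ccoef A n j else 0

def Qstepi (A : ℕ → ℕ → k) (n : ℕ) : ℕ → ℕ → k :=
  fun i j => one i j + if i = piv A n then ccoef A n j else 0

def dcoef (A : ℕ → ℕ → k) (n i : ℕ) : k :=
  if n < i then mul A (Qstep A n) i (piv A n) / A n (piv A n) else 0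

def Pstep (A : ℕ → ℕ → k) (n : ℕ) : ℕ → ℕ → k :=
  fun i j => one i j - if j = n then dcoef A n i else 0

def Pstepi (A : ℕ → ℕ → k) (n : ℕ) : ℕ → ℕ → k :=
  fun i j => one i j + if j = n then dcoef A n i else 0

lemma ccoef_piv (A : ℕ → ℕ → k) (n : ℕ) : ccoef A n (piv A n) = 0 := by
  rw [ccoef, if_pos rfl]

lemma ccoef_of_zero {A : ℕ → ℕ → k} {n j : ℕ} (h : A n j = 0) : ccoef A n j = 0 := by
  rw [ccoef]; split
  · rfl
  · rw [h, zero_div]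

lemma dcoef_of_le {A : ℕ → ℕ → k} {n i : ℕ} (h : i ≤ n) : dcoef A n i = 0 := by
  rw [dcoef, if_neg (by omega)]

/-- Right multiplication by `Qstep`: the column operation. -/
lemma mul_Qstep (A B : ℕ → ℕ → k) (n i j : ℕ) :
    mul B (Qstep A n) i j = B i j - ccoef A n j * B i (piv A n) := by
  set p := piv A n with hp
  have hsupp : ∀ t, t ∉ ({j, p} : Finset ℕ) → Qstep A n t j = 0 := by
    intro t ht
    simp only [Finset.mem_insert, Finset.mem_singleton, not_or] at ht
    simp only [Qstep, one, if_neg (show ¬ t = j from ht.1), if_neg (show ¬ t = piv A n from ht.2), sub_zero]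
  rw [mul_colsupp B (Qstep A n) i j _ hsupp]
  by_cases hjp : j = p
  · subst hjp
    rw [Finset.insert_eq_self.2 (Finset.mem_singleton_self p), Finset.sum_singleton]
    simp [Qstep, one, ccoef_piv, ← hp]
    ring
  · rw [Finset.sum_pair hjp]
    simp only [Qstep, one, if_neg (show ¬ j = piv A n from hjp), if_pos (show p = piv A n from rfl), if_neg (show ¬ p = j from fun h => hjp h.symm),
      eq_self_iff_true, if_true]
    ring

/-- Right multiplication by `Qstepi`. -/
lemma mul_Qstepi (A B : ℕ → ℕ → k) (n i j : ℕ) :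
    mul B (Qstepi A n) i j = B i j + ccoef A n j * B i (piv A n) := by
  set p := piv A n with hp
  have hsupp : ∀ t, t ∉ ({j, p} : Finset ℕ) → Qstepi A n t j = 0 := by
    intro t ht
    simp only [Finset.mem_insert, Finset.mem_singleton, not_or] at ht
    simp only [Qstepi, one, if_neg (show ¬ t = j from ht.1), if_neg (show ¬ t = piv A n from ht.2), add_zero]
  rw [mul_colsupp B (Qstepi A n) i j _ hsupp]
  by_cases hjp : j = p
  · subst hjp
    rw [Finset.insert_eq_self.2 (Finset.mem_singleton_self p), Finset.sum_singleton]
    simp [Qstepi, one, ccoef_piv, ← hp]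
    ring
  · rw [Finset.sum_pair hjp]
    simp only [Qstepi, one, if_neg (show ¬ j = piv A n from hjp), if_pos (show p = piv A n from rfl), if_neg (show ¬ p = j from fun h => hjp h.symm),
      eq_self_iff_true, if_true]
    ring

/-- Left multiplication by `Pstep`: the row operation. -/
lemma Pstep_mul (A B : ℕ → ℕ → k) (n i j : ℕ) :
    mul (Pstep A n) B i j = B i j - dcoef A n i * B n j := by
  have hsupp : ∀ t, t ∉ ({i, n} : Finset ℕ) → Pstep A n i t = 0 := by
    intro t ht
    simp only [Finset.mem_insert, Finset.mem_singleton, not_or] at ht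
    simp only [Pstep, one, if_neg (show ¬ i = t from fun h => ht.1 h.symm), if_neg ht.2, sub_zero]
  rw [mul_rowsupp (Pstep A n) B i j _ hsupp]
  by_cases hin : i = n
  · subst hin
    rw [Finset.insert_eq_self.2 (Finset.mem_singleton_self i), Finset.sum_singleton]
    simp [Pstep, one, dcoef_of_le (le_refl i)]
  · rw [Finset.sum_pair hin]
    simp only [Pstep, one, if_neg hin, if_neg (show ¬ i = n from hin),
      eq_self_iff_true, if_true]
    ring

/-- Left multiplication by `Pstepi`. -/
lemma Pstepi_mul (A B : ℕ → ℕ → k) (n i j : ℕ) :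
    mul (Pstepi A n) B i j = B i j + dcoef A n i * B n j := by
  have hsupp : ∀ t, t ∉ ({i, n} : Finset ℕ) → Pstepi A n i t = 0 := by
    intro t ht
    simp only [Finset.mem_insert, Finset.mem_singleton, not_or] at ht
    simp only [Pstepi, one, if_neg (show ¬ i = t from fun h => ht.1 h.symm), if_neg ht.2, add_zero]
  rw [mul_rowsupp (Pstepi A n) B i j _ hsupp]
  by_cases hin : i = n
  · subst hin
    rw [Finset.insert_eq_self.2 (Finset.mem_singleton_self i), Finset.sum_singleton]
    simp [Pstepi, one, dcoef_of_le (le_refl i)]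
  · rw [Finset.sum_pair hin]
    simp only [Pstepi, one, if_neg hin, if_neg (show ¬ i = n from hin),
      eq_self_iff_true, if_true]
    ring

/-- Left multiplication by `Qstepi` (needs finiteness of the coefficient row). -/
lemma Qstepi_mul (A B : ℕ → ℕ → k) (n : ℕ) (hfin : {j | A n j ≠ 0}.Finite) (i j : ℕ) :
    mul (Qstepi A n) B i j
      = B i j + (if i = piv A n then ∑ᶠ s, ccoef A n s * B s j else 0) := by
  set p := piv A n with hp
  have hc : ∀ s, ccoef A n s ≠ 0 → A n s ≠ 0 := by
    intro s hs hzero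
    exact hs (ccoef_of_zero hzero)
  have hterm : ∀ s, Qstepi A n i s * B s j
      = one i s * B s j + (if i = p then ccoef A n s else 0) * B s j := by
    intro s; rw [Qstepi, add_mul]
  have h1fin : (Function.support fun s => one i s * B s j).Finite := by
    apply Set.Finite.subset (Set.finite_singleton i)
    intro s hs
    simp only [Function.mem_support] at hs
    by_contra h
    exact hs (by simp [one, show ¬ i = s from fun he => h (by simp [he])])
  have h2fin : (Function.support fun s => (if i = p then ccoef A n s else 0) * B s j).Finite := by
    apply Set.Finite.subset hfin
    intro s hs
    simp only [Function.mem_support] at hs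
    simp only [Set.mem_setOf_eq]
    intro hzero
    apply hs
    rw [ccoef_of_zero hzero]
    split <;> simp
  have : mul (Qstepi A n) B i j = ∑ᶠ s, (one i s * B s j
      + (if i = p then ccoef A n s else 0) * B s j) := by
    rw [mul]; congr 1; funext s; rw [hterm]
  rw [this, finsum_add_distrib h1fin h2fin]
  congr 1
  · rw [finsum_eq_single _ i (fun s hs => by simp [one, Ne.symm hs])]
    simp [one]
  · by_cases hip : i = p
    · rw [if_pos hip]
      congr 1; funext s; rw [if_pos hip]
    · rw [if_neg hip]
      exact finsum_eq_zero_of_forall_eq_zero (fun s => by rw [if_neg hip, zero_mul])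

/-- Right multiplication by `Pstepi` (needs row-finiteness of `B`). -/
lemma mul_Pstepi (A B : ℕ → ℕ → k) (n : ℕ) (hB : RowFinite B) (i j : ℕ) :
    mul B (Pstepi A n) i j
      = B i j + (if j = n then ∑ᶠ s, B i s * dcoef A n s else 0) := by
  have hterm : ∀ s, B i s * Pstepi A n s j
      = B i s * one s j + B i s * (if j = n then dcoef A n s else 0) := by
    intro s; rw [Pstepi, mul_add]
  have h1fin : (Function.support fun s => B i s * one s j).Finite :=
    Set.Finite.subset (hB i) (fun s hs => by
      simp only [Function.mem_support] at hs
      simp only [Set.mem_setOf_eq]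
      intro h; exact hs (by rw [h, zero_mul]))
  have h2fin : (Function.support fun s => B i s * (if j = n then dcoef A n s else 0)).Finite :=
    Set.Finite.subset (hB i) (fun s hs => by
      simp only [Function.mem_support] at hs
      simp only [Set.mem_setOf_eq]
      intro h; exact hs (by rw [h, zero_mul]))
  have : mul B (Pstepi A n) i j = ∑ᶠ s, (B i s * one s j
      + B i s * (if j = n then dcoef A n s else 0)) := by
    rw [mul]; congr 1; funext s; rw [hterm]
  rw [this, finsum_add_distrib h1fin h2fin]
  congr 1
  · rw [finsum_eq_single _ j (fun s hs => by simp [one, hs])]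
    simp [one]
  · by_cases hjn : j = n
    · rw [if_pos hjn]
      congr 1; funext s; rw [if_pos hjn]
    · rw [if_neg hjn]
      exact finsum_eq_zero_of_forall_eq_zero (fun s => by rw [if_neg hjn, mul_zero])


/-! ### The elimination sequence -/

def S (M : ℕ → ℕ → k) : ℕ → ℕ → ℕ → k
  | 0 => M
  | n+1 => mul (Pstep (S M n) n) (mul (S M n) (Qstep (S M n) n))

lemma S_zero (M : ℕ → ℕ → k) : S M 0 = M := rfl

lemma S_succ (M : ℕ → ℕ → k) (n : ℕ) :
    S M (n+1) = mul (Pstep (S M n) n) (mul (S M n) (Qstep (S M n) n)) := rfl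

structure Inv (M : ℕ → ℕ → k) (n : ℕ) : Prop where
  rf : RowFinite (S M n)
  zr : ∀ i, i < n → ZeroRow (S M i) i → ZeroRow (S M n) i
  pv : ∀ i, i < n → ¬ ZeroRow (S M i) i →
        S M n i (piv (S M i) i) ≠ 0 ∧
        (∀ j, j ≠ piv (S M i) i → S M n i j = 0) ∧
        (∀ a, a ≠ i → S M n a (piv (S M i) i) = 0)

lemma step_main (M : ℕ → ℕ → k) (n : ℕ) (hn : Inv M n) :
    Inv M (n+1) ∧ ∀ i, i < n → ∀ b, S M (n+1) i b = S M n i b := by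
  set A := S M n with hAdef
  set p := piv A n with hpdef
  have hA1 : ∀ a b, mul A (Qstep A n) a b = A a b - ccoef A n b * A a p := by
    intro a b; exact mul_Qstep A A n a b
  have hA2 : ∀ a b, S M (n+1) a b
      = mul A (Qstep A n) a b - dcoef A n a * mul A (Qstep A n) n b := by
    intro a b; rw [S_succ]; exact Pstep_mul A (mul A (Qstep A n)) n a b
  by_cases hz : ZeroRow A n
  · -- zero row: the step does nothing
    have hc : ∀ b, ccoef A n b = 0 := fun b => ccoef_of_zero (hz b)
    have hA1eq : ∀ a b, mul A (Qstep A n) a b = A a b := by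
      intro a b; rw [hA1, hc, zero_mul, sub_zero]
    have hd : ∀ a, dcoef A n a = 0 := by
      intro a
      rw [dcoef, hz p, div_zero]
      split <;> rfl
    have heq : ∀ a b, S M (n+1) a b = A a b := by
      intro a b; rw [hA2, hd, zero_mul, sub_zero, hA1eq]
    refine ⟨⟨?_, ?_, ?_⟩, fun i _ b => heq i b⟩
    · intro a
      apply Set.Finite.subset (hn.rf a)
      intro b hb
      simp only [Set.mem_setOf_eq] at hb ⊢
      rw [heq] at hb; exact hb
    · intro i hi hzi
      rcases Nat.lt_or_ge i n with h | h
      · intro j; rw [heq]; exact hn.zr i h hzi j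
      · have : i = n := by omega
        subst this
        intro j; rw [heq]; exact hzi j
    · intro i hi hne
      rcases Nat.lt_or_ge i n with h | h
      · obtain ⟨h1, h2, h3⟩ := hn.pv i h hne
        exact ⟨by rw [heq]; exact h1, fun j hj => by rw [heq]; exact h2 j hj,
          fun a ha => by rw [heq]; exact h3 a ha⟩
      · have : i = n := by omega
        subst this
        exact absurd hz hne
  · -- nonzero row
    obtain ⟨hpne, hpmax⟩ := piv_spec (hn.rf n) hz
    rw [← hpdef] at hpne hpmax
    have hcp : ccoef A n p = 0 := ccoef_piv A n
    have hA1n : ∀ b, b ≠ p → mul A (Qstep A n) n b = 0 := by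
      intro b hb
      rw [hA1, ccoef, if_neg (by rw [← hpdef]; exact hb), ← hpdef,
        div_mul_cancel₀ _ hpne, sub_self]
    have hA1np : mul A (Qstep A n) n p = A n p := by
      rw [hA1, hcp, zero_mul, sub_zero]
    -- all old rows vanish in column p
    have hip0 : ∀ i, i < n → A i p = 0 := by
      intro i hi
      by_cases hzi : ZeroRow (S M i) i
      · exact hn.zr i hi hzi p
      · obtain ⟨h1, h2, h3⟩ := hn.pv i hi hzi
        apply h2
        intro hpq
        exact hpne (by rw [hpq]; exact h3 n (by omega))
    have hstab : ∀ i, i < n → ∀ b, S M (n+1) i b = A i b := by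
      intro i hi b
      rw [hA2, dcoef_of_le (by omega), zero_mul, sub_zero, hA1, hip0 i hi, mul_zero, sub_zero]
    refine ⟨⟨?_, ?_, ?_⟩, hstab⟩
    · -- row-finiteness
      intro a
      apply Set.Finite.subset ((hn.rf a).union (hn.rf n))
      intro b hb
      simp only [Set.mem_setOf_eq, Set.mem_union] at hb ⊢
      by_contra hcon
      push_neg at hcon
      apply hb
      have hcb : ccoef A n b = 0 := ccoef_of_zero hcon.2
      rw [hA2, hA1, hA1, hcb, zero_mul, zero_mul, sub_zero, sub_zero, hAdef, hcon.1, hcon.2,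
        mul_zero, sub_zero]
    · -- zero rows stay zero
      intro i hi hzi
      rcases Nat.lt_or_ge i n with h | h
      · intro j
        rw [hstab i h j]
        exact hn.zr i h hzi j
      · have : i = n := by omega
        subst this
        exact absurd hzi hz
    · -- pivot rows
      intro i hi hne
      rcases Nat.lt_or_ge i n with h | h
      · obtain ⟨h1, h2, h3⟩ := hn.pv i h hne
        set q := piv (S M i) i with hq
        have hAnq : A n q = 0 := h3 n (by omega)
        have hcq : ccoef A n q = 0 := ccoef_of_zero hAnq
        have hcol : ∀ a, a ≠ i → S M (n+1) a q = 0 := by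
          intro a ha
          rw [hA2, hA1, hA1, hcq, zero_mul, zero_mul, sub_zero, sub_zero, hAnq, mul_zero,
            sub_zero]
          exact h3 a ha
        exact ⟨by rw [hstab i h]; exact h1, fun j hj => by rw [hstab i h]; exact h2 j hj, hcol⟩
      · have : i = n := by omega
        subst this
        rw [show piv (S M i) i = p from rfl]
        refine ⟨?_, ?_, ?_⟩
        · rw [hA2, dcoef_of_le (le_refl i), zero_mul, sub_zero, hA1np]
          exact hpne
        · intro j hj
          rw [hA2, dcoef_of_le (le_refl i), zero_mul, sub_zero, hA1n j hj]
        · intro a ha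
          rcases Nat.lt_or_ge a i with h' | h'
          · rw [hstab a h' p]
            exact hip0 a h'
          · have hai : i < a := by omega
            rw [hA2, hA1np, dcoef, if_pos hai, ← hpdef, div_mul_cancel₀ _ hpne, sub_self]

lemma inv_all (M : ℕ → ℕ → k) (hM : RowFinite M) : ∀ n, Inv M n := by
  intro n
  induction n with
  | zero => exact ⟨hM, fun i hi => absurd hi (by omega), fun i hi => absurd hi (by omega)⟩
  | succ n ih => exact (step_main M n ih).1

lemma stab_ge (M : ℕ → ℕ → k) (hM : RowFinite M) :
    ∀ n i, i < n → ∀ j, S M n i j = S M (i+1) i j := by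
  intro n
  induction n with
  | zero => intro i hi; omega
  | succ n ih =>
    intro i hi j
    rcases Nat.lt_or_ge i n with h | h
    · rw [(step_main M n (inv_all M hM n)).2 i h j]
      exact ih i h j
    · have : i = n := by omega
      subst this
      rfl

def Nmat (M : ℕ → ℕ → k) : ℕ → ℕ → k := fun i j => S M (i+1) i j

lemma Nmat_rowFinite (M : ℕ → ℕ → k) (hM : RowFinite M) : RowFinite (Nmat M) := by
  intro i
  exact (inv_all M hM (i+1)).rf i

lemma Nmat_canonical (M : ℕ → ℕ → k) (hM : RowFinite M) : CanonicalForm (Nmat M) := by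
  have key : ∀ n i, i < n → ∀ j, Nmat M i j = S M n i j := by
    intro n i hi j
    rw [Nmat, stab_ge M hM n i hi j]
  constructor
  · intro i j j' hj hj'
    have hinv := inv_all M hM (i+1)
    by_cases hz : ZeroRow (S M i) i
    · exact absurd (hinv.zr i (by omega) hz j) hj
    · obtain ⟨h1, h2, h3⟩ := hinv.pv i (by omega) hz
      have e1 : j = piv (S M i) i := by
        by_contra h
        exact hj (h2 j h)
      have e2 : j' = piv (S M i) i := by
        by_contra h
        exact hj' (h2 j' h)
      rw [e1, e2]
  · intro j i i' hi hi'
    by_contra hne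
    -- wlog i < i'
    have main : ∀ a b, a < b → Nmat M a j ≠ 0 → Nmat M b j ≠ 0 → False := by
      intro a b hab ha hb
      have hinv := inv_all M (hM) (b+1)
      by_cases hz : ZeroRow (S M a) a
      · exact ha (by rw [key (b+1) a (by omega) j]; exact hinv.zr a (by omega) hz j)
      · obtain ⟨h1, h2, h3⟩ := hinv.pv a (by omega) hz
        have hj : j = piv (S M a) a := by
          by_contra h
          exact ha (by rw [key (b+1) a (by omega) j]; exact h2 j h)
        apply hb
        rw [key (b+1) b (by omega) j, hj]
        exact h3 b (by omega)
    rcases Nat.lt_or_ge i i' with h | h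
    · exact main i i' h hi hi'
    · exact main i' i (by omega) hi' hi


/-! ### Lower triangularity of step matrices -/

lemma LT_Qstep {A : ℕ → ℕ → k} {n : ℕ} (hfin : {j | A n j ≠ 0}.Finite) :
    LT (Qstep A n) := by
  intro i j hij
  have h1 : one (k := k) i j = 0 := LT_one hij
  by_cases hip : i = piv A n
  · have hAnj : A n j = 0 := by
      by_cases hz : ZeroRow A n
      · exact hz j
      · exact (piv_spec hfin hz).2 j (by rw [← hip]; exact hij)
    simp [Qstep, h1, if_pos hip, ccoef_of_zero hAnj]
  · simp [Qstep, h1, if_neg hip]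

lemma LT_Qstepi {A : ℕ → ℕ → k} {n : ℕ} (hfin : {j | A n j ≠ 0}.Finite) :
    LT (Qstepi A n) := by
  intro i j hij
  have h1 : one (k := k) i j = 0 := LT_one hij
  by_cases hip : i = piv A n
  · have hAnj : A n j = 0 := by
      by_cases hz : ZeroRow A n
      · exact hz j
      · exact (piv_spec hfin hz).2 j (by rw [← hip]; exact hij)
    simp [Qstepi, h1, if_pos hip, ccoef_of_zero hAnj]
  · simp [Qstepi, h1, if_neg hip]

lemma LT_Pstep (A : ℕ → ℕ → k) (n : ℕ) : LT (Pstep A n) := by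
  intro i j hij
  have h1 : one (k := k) i j = 0 := LT_one hij
  by_cases hjn : j = n
  · subst hjn
    have : dcoef A j i = 0 := dcoef_of_le (by omega)
    simp [Pstep, h1, this]
  · simp [Pstep, h1, hjn]

lemma LT_Pstepi (A : ℕ → ℕ → k) (n : ℕ) : LT (Pstepi A n) := by
  intro i j hij
  have h1 : one (k := k) i j = 0 := LT_one hij
  by_cases hjn : j = n
  · subst hjn
    have : dcoef A j i = 0 := dcoef_of_le (by omega)
    simp [Pstepi, h1, this]
  · simp [Pstepi, h1, hjn]

/-! ### Step inverses -/

lemma Qstepi_Qstep (A : ℕ → ℕ → k) (n : ℕ) :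
    mul (Qstepi A n) (Qstep A n) = one := by
  funext i j
  rw [mul_Qstep]
  by_cases h : i = piv A n
  · have e1 : Qstepi A n i j = one i j + ccoef A n j := by simp [Qstepi, h]
    have e2 : Qstepi A n i (piv A n) = 1 := by simp [Qstepi, h, ccoef_piv, one]
    rw [e1, e2]; ring
  · have e1 : Qstepi A n i j = one i j := by simp [Qstepi, h]
    have e2 : Qstepi A n i (piv A n) = 0 := by simp [Qstepi, one, h, ccoef_piv]
    rw [e1, e2]; ring

lemma Qstep_Qstepi (A : ℕ → ℕ → k) (n : ℕ) :
    mul (Qstep A n) (Qstepi A n) = one := by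
  funext i j
  rw [mul_Qstepi]
  by_cases h : i = piv A n
  · have e1 : Qstep A n i j = one i j - ccoef A n j := by simp [Qstep, h]
    have e2 : Qstep A n i (piv A n) = 1 := by simp [Qstep, h, ccoef_piv, one]
    rw [e1, e2]; ring
  · have e1 : Qstep A n i j = one i j := by simp [Qstep, h]
    have e2 : Qstep A n i (piv A n) = 0 := by simp [Qstep, one, h, ccoef_piv]
    rw [e1, e2]; ring

lemma Pstep_Pstepi (A : ℕ → ℕ → k) (n : ℕ) :
    mul (Pstep A n) (Pstepi A n) = one := by
  funext i j
  rw [Pstep_mul]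
  by_cases h : j = n
  · have e1 : Pstepi A n i j = one i j + dcoef A n i := by simp [Pstepi, h]
    have e2 : Pstepi A n n j = 1 := by simp [Pstepi, h, dcoef_of_le (le_refl n), one]
    rw [e1, e2]; ring
  · have e1 : Pstepi A n i j = one i j := by simp [Pstepi, h]
    have e2 : Pstepi A n n j = 0 := by
      simp [Pstepi, one, h, show ¬ n = j from fun hh => h hh.symm]
    rw [e1, e2]; ring

lemma Pstepi_Pstep (A : ℕ → ℕ → k) (n : ℕ) :
    mul (Pstepi A n) (Pstep A n) = one := by
  funext i j
  rw [Pstepi_mul]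
  by_cases h : j = n
  · have e1 : Pstep A n i j = one i j - dcoef A n i := by simp [Pstep, h]
    have e2 : Pstep A n n j = 1 := by simp [Pstep, h, dcoef_of_le (le_refl n), one]
    rw [e1, e2]; ring
  · have e1 : Pstep A n i j = one i j := by simp [Pstep, h]
    have e2 : Pstep A n n j = 0 := by
      simp [Pstep, one, h, show ¬ n = j from fun hh => h hh.symm]
    rw [e1, e2]; ring

/-! ### Cumulative transformation matrices -/

def Pc (M : ℕ → ℕ → k) : ℕ → ℕ → ℕ → k
  | 0 => one
  | n+1 => mul (Pstep (S M n) n) (Pc M n)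

def Pci (M : ℕ → ℕ → k) : ℕ → ℕ → ℕ → k
  | 0 => one
  | n+1 => mul (Pci M n) (Pstepi (S M n) n)

def Qc (M : ℕ → ℕ → k) : ℕ → ℕ → ℕ → k
  | 0 => one
  | n+1 => mul (Qc M n) (Qstep (S M n) n)

def Qci (M : ℕ → ℕ → k) : ℕ → ℕ → ℕ → k
  | 0 => one
  | n+1 => mul (Qstepi (S M n) n) (Qci M n)

lemma LT_Pc (M : ℕ → ℕ → k) : ∀ n, LT (Pc M n)
  | 0 => LT_one
  | n+1 => LT_mul (LT_Pstep (S M n) n) (LT_Pc M n)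

lemma LT_Pci (M : ℕ → ℕ → k) : ∀ n, LT (Pci M n)
  | 0 => LT_one
  | n+1 => LT_mul (LT_Pci M n) (LT_Pstepi (S M n) n)

lemma LT_Qc (M : ℕ → ℕ → k) (hM : RowFinite M) : ∀ n, LT (Qc M n)
  | 0 => LT_one
  | n+1 => LT_mul (LT_Qc M hM n) (LT_Qstep ((inv_all M hM n).rf n))

lemma LT_Qci (M : ℕ → ℕ → k) (hM : RowFinite M) : ∀ n, LT (Qci M n)
  | 0 => LT_one
  | n+1 => LT_mul (LT_Qstepi ((inv_all M hM n).rf n)) (LT_Qci M hM n)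

lemma Pc_Pci (M : ℕ → ℕ → k) :
    ∀ n, mul (Pc M n) (Pci M n) = one ∧ mul (Pci M n) (Pc M n) = one := by
  intro n
  induction n with
  | zero => constructor <;> exact one_mul' one
  | succ n ih =>
    have hPs := (LT_Pstep (S M n) n).rowFinite
    have hPsi := (LT_Pstepi (S M n) n).rowFinite
    have hPc := (LT_Pc M n).rowFinite
    have hPci := (LT_Pci M n).rowFinite
    constructor
    · show mul (mul (Pstep (S M n) n) (Pc M n)) (mul (Pci M n) (Pstepi (S M n) n)) = one
      rw [mul_assoc' _ hPs hPc, ← mul_assoc' _ hPc hPci, ih.1, one_mul',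
        Pstep_Pstepi]
    · show mul (mul (Pci M n) (Pstepi (S M n) n)) (mul (Pstep (S M n) n) (Pc M n)) = one
      rw [mul_assoc' _ hPci hPsi, ← mul_assoc' _ hPsi hPs, Pstepi_Pstep, one_mul',
        ih.2]

lemma Qc_Qci (M : ℕ → ℕ → k) (hM : RowFinite M) :
    ∀ n, mul (Qc M n) (Qci M n) = one ∧ mul (Qci M n) (Qc M n) = one := by
  intro n
  induction n with
  | zero => constructor <;> exact one_mul' one
  | succ n ih =>
    have hQs := (LT_Qstep ((inv_all M hM n).rf n)).rowFinite
    have hQsi := (LT_Qstepi ((inv_all M hM n).rf n)).rowFinite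
    have hQc := (LT_Qc M hM n).rowFinite
    have hQci := (LT_Qci M hM n).rowFinite
    constructor
    · show mul (mul (Qc M n) (Qstep (S M n) n)) (mul (Qstepi (S M n) n) (Qci M n)) = one
      rw [mul_assoc' _ hQc hQs, ← mul_assoc' _ hQs hQsi, Qstep_Qstepi, one_mul',
        ih.1]
    · show mul (mul (Qstepi (S M n) n) (Qci M n)) (mul (Qc M n) (Qstep (S M n) n)) = one
      rw [mul_assoc' _ hQsi hQci, ← mul_assoc' _ hQci hQc, ih.2, one_mul',
        Qstepi_Qstep]

lemma S_fact (M : ℕ → ℕ → k) (hM : RowFinite M) :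
    ∀ n, S M n = mul (Pc M n) (mul M (Qc M n)) := by
  intro n
  induction n with
  | zero => rw [S_zero, show Pc M 0 = one from rfl, show Qc M 0 = one from rfl,
      mul_one', one_mul']
  | succ n ih =>
    have hPc := (LT_Pc M n).rowFinite
    have hQc := (LT_Qc M hM n).rowFinite
    have hMQ : RowFinite (mul M (Qc M n)) := rowFinite_mul hM hQc
    have hPs := (LT_Pstep (S M n) n).rowFinite
    rw [S_succ,
      show Pc M (n+1) = mul (Pstep (S M n) n) (Pc M n) from rfl,
      show Qc M (n+1) = mul (Qc M n) (Qstep (S M n) n) from rfl,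
      mul_assoc' (mul M (mul (Qc M n) (Qstep (S M n) n))) hPs hPc,
      ← mul_assoc' (Qstep (S M n) n) hM hQc,
      ← mul_assoc' (Qstep (S M n) n) hPc hMQ,
      ← ih]

/-! ### Stabilization of the transformations -/

lemma Pc_stab (M : ℕ → ℕ → k) :
    ∀ n i, i ≤ n → ∀ j, Pc M n i j = Pc M i i j := by
  intro n
  induction n with
  | zero => intro i hi j; rw [Nat.le_zero.mp hi]
  | succ n ih =>
    intro i hi j
    rcases Nat.lt_or_ge i (n+1) with h | h
    · have hin : i ≤ n := by omega
      have : Pc M (n+1) i j = Pc M n i j - dcoef (S M n) n i * Pc M n n j :=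
        Pstep_mul (S M n) (Pc M n) n i j
      rw [this, dcoef_of_le hin, zero_mul, sub_zero]
      exact ih i hin j
    · have : i = n + 1 := by omega
      rw [this]

lemma Pci_stab (M : ℕ → ℕ → k) :
    ∀ n i, i ≤ n → ∀ j, Pci M n i j = Pci M i i j := by
  intro n
  induction n with
  | zero => intro i hi j; rw [Nat.le_zero.mp hi]
  | succ n ih =>
    intro i hi j
    rcases Nat.lt_or_ge i (n+1) with h | h
    · have hin : i ≤ n := by omega
      have heq : Pci M (n+1) i j = Pci M n i j
          + (if j = n then ∑ᶠ s, Pci M n i s * dcoef (S M n) n s else 0) :=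
        mul_Pstepi (S M n) (Pci M n) n (LT_Pci M n).rowFinite i j
      have hz : (∑ᶠ s, Pci M n i s * dcoef (S M n) n s) = 0 := by
        apply finsum_eq_zero_of_forall_eq_zero
        intro s
        rcases Nat.lt_or_ge n s with hs | hs
        · rw [LT_Pci M n (by omega : i < s), zero_mul]
        · rw [dcoef_of_le hs, mul_zero]
      rw [heq, hz]
      have : (if j = n then (0:k) else 0) = 0 := by split <;> rfl
      rw [this, add_zero]
      exact ih i hin j
    · have : i = n + 1 := by omega
      rw [this]

lemma piv_ne (M : ℕ → ℕ → k) (hM : RowFinite M) {m n : ℕ} (h : m < n)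
    (hm : ¬ZeroRow (S M m) m) (hn' : ¬ZeroRow (S M n) n) :
    piv (S M n) n ≠ piv (S M m) m := by
  intro he
  have h3 := ((inv_all M hM n).pv m h hm).2.2
  have hz := h3 n (by omega)
  have h1 := (piv_spec ((inv_all M hM n).rf n) hn').1
  rw [he] at h1
  exact h1 hz

lemma exists_bound (M : ℕ → ℕ → k) (hM : RowFinite M) (i : ℕ) :
    ∃ B, ∀ n, B ≤ n → ZeroRow (S M n) n ∨ i < piv (S M n) n := by
  set F := {n | ¬ZeroRow (S M n) n ∧ piv (S M n) n ≤ i} with hF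
  have hFfin : F.Finite := by
    have himg : (fun n => piv (S M n) n) '' F ⊆ Set.Iic i := by
      rintro _ ⟨n, hn, rfl⟩; exact hn.2
    apply Set.Finite.of_finite_image (Set.Finite.subset (Set.finite_Iic i) himg)
    intro a ha b hb hab
    by_contra hne
    rcases Nat.lt_or_ge a b with h | h
    · exact (piv_ne M hM h ha.1 hb.1) hab.symm
    · exact (piv_ne M hM (show b < a by omega) hb.1 ha.1) hab
  obtain ⟨B, hB⟩ := hFfin.bddAbove
  refine ⟨B+1, fun n hn => ?_⟩
  by_contra hcon
  push_neg at hcon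
  have hmem : n ∈ F := ⟨hcon.1, hcon.2⟩
  have := hB hmem
  omega

lemma Qc_stab (M : ℕ → ℕ → k) (hM : RowFinite M) (i : ℕ) :
    ∃ B, ∀ n, B ≤ n →
      (∀ j, Qc M n i j = Qc M B i j) ∧ (∀ j, Qci M n i j = Qci M B i j) := by
  obtain ⟨B, hB⟩ := exists_bound M hM i
  refine ⟨B, ?_⟩
  intro n
  induction n with
  | zero =>
    intro hn
    exact ⟨fun j => by rw [Nat.le_zero.mp hn], fun j => by rw [Nat.le_zero.mp hn]⟩
  | succ n ih =>
    intro hn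
    rcases Nat.lt_or_ge n B with h | h
    · have : B = n + 1 := by omega
      rw [this]
      exact ⟨fun j => rfl, fun j => rfl⟩
    · have ihn := ih h
      have hstep := hB n h
      constructor
      · intro j
        have heq : Qc M (n+1) i j
            = Qc M n i j - ccoef (S M n) n j * Qc M n i (piv (S M n) n) :=
          mul_Qstep (S M n) (Qc M n) n i j
        rcases hstep with hz | hp
        · rw [heq, ccoef_of_zero (hz j), zero_mul, sub_zero]
          exact ihn.1 j
        · rw [heq, LT_Qc M hM n hp, mul_zero, sub_zero]
          exact ihn.1 j
      · intro j
        have heq : Qci M (n+1) i j = Qci M n i j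
            + (if i = piv (S M n) n then ∑ᶠ s, ccoef (S M n) n s * Qci M n s j else 0) :=
          Qstepi_mul (S M n) (Qci M n) n ((inv_all M hM n).rf n) i j
        rcases hstep with hz | hp
        · have hsum : (∑ᶠ s, ccoef (S M n) n s * Qci M n s j) = 0 :=
            finsum_eq_zero_of_forall_eq_zero
              (fun s => by rw [ccoef_of_zero (hz s), zero_mul])
          rw [heq, hsum]
          have : (if i = piv (S M n) n then (0:k) else 0) = 0 := by split <;> rfl
          rw [this, add_zero]
          exact ihn.2 j
        · rw [heq, if_neg (show ¬ i = piv (S M n) n by omega), add_zero]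
          exact ihn.2 j


/-! ### The limit transformations -/

def Plim (M : ℕ → ℕ → k) : ℕ → ℕ → k := fun i => Pc M i i

def Pilim (M : ℕ → ℕ → k) : ℕ → ℕ → k := fun i => Pci M i i

def Qbnd (M : ℕ → ℕ → k) (hM : RowFinite M) (i : ℕ) : ℕ :=
  Classical.choose (Qc_stab M hM i)

lemma Qbnd_spec (M : ℕ → ℕ → k) (hM : RowFinite M) (i : ℕ) :
    ∀ n, Qbnd M hM i ≤ n →
      (∀ j, Qc M n i j = Qc M (Qbnd M hM i) i j)
      ∧ (∀ j, Qci M n i j = Qci M (Qbnd M hM i) i j) :=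
  Classical.choose_spec (Qc_stab M hM i)

def Qlim (M : ℕ → ℕ → k) (hM : RowFinite M) : ℕ → ℕ → k :=
  fun i => Qc M (Qbnd M hM i) i

def Qilim (M : ℕ → ℕ → k) (hM : RowFinite M) : ℕ → ℕ → k :=
  fun i => Qci M (Qbnd M hM i) i

lemma LT_Plim (M : ℕ → ℕ → k) : LT (Plim M) :=
  fun i j h => LT_Pc M i h

lemma LT_Pilim (M : ℕ → ℕ → k) : LT (Pilim M) :=
  fun i j h => LT_Pci M i h

lemma LT_Qlim (M : ℕ → ℕ → k) (hM : RowFinite M) : LT (Qlim M hM) :=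
  fun i j h => LT_Qc M hM (Qbnd M hM i) h

lemma LT_Qilim (M : ℕ → ℕ → k) (hM : RowFinite M) : LT (Qilim M hM) :=
  fun i j h => LT_Qci M hM (Qbnd M hM i) h

lemma Plim_Pilim (M : ℕ → ℕ → k) : mul (Plim M) (Pilim M) = one := by
  funext i j
  have hpt : ∀ s, Plim M i s * Pilim M s j = Pc M i i s * Pci M i s j := by
    intro s
    rcases le_or_gt s i with h | h
    · show Pc M i i s * Pci M s s j = Pc M i i s * Pci M i s j
      rw [← Pci_stab M i s h j]
    · show Pc M i i s * Pci M s s j = Pc M i i s * Pci M i s j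
      rw [LT_Pc M i h, zero_mul, zero_mul]
  have he : mul (Plim M) (Pilim M) i j = mul (Pc M i) (Pci M i) i j := by
    show (∑ᶠ s, Plim M i s * Pilim M s j) = ∑ᶠ s, Pc M i i s * Pci M i s j
    exact finsum_congr hpt
  rw [he, (Pc_Pci M i).1]

lemma Pilim_Plim (M : ℕ → ℕ → k) : mul (Pilim M) (Plim M) = one := by
  funext i j
  have hpt : ∀ s, Pilim M i s * Plim M s j = Pci M i i s * Pc M i s j := by
    intro s
    rcases le_or_gt s i with h | h
    · show Pci M i i s * Pc M s s j = Pci M i i s * Pc M i s j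
      rw [← Pc_stab M i s h j]
    · show Pci M i i s * Pc M s s j = Pci M i i s * Pc M i s j
      rw [LT_Pci M i h, zero_mul, zero_mul]
  have he : mul (Pilim M) (Plim M) i j = mul (Pci M i) (Pc M i) i j := by
    show (∑ᶠ s, Pilim M i s * Plim M s j) = ∑ᶠ s, Pci M i i s * Pc M i s j
    exact finsum_congr hpt
  rw [he, (Pc_Pci M i).2]

lemma Qlim_Qilim (M : ℕ → ℕ → k) (hM : RowFinite M) :
    mul (Qlim M hM) (Qilim M hM) = one := by
  funext i j
  set nn := Finset.sup (Finset.range (i+1)) (fun s => Qbnd M hM s) with hnn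
  have hble : ∀ s, s ≤ i → Qbnd M hM s ≤ nn :=
    fun s hs => Finset.le_sup (Finset.mem_range.mpr (by omega))
  have hpt : ∀ s, Qlim M hM i s * Qilim M hM s j = Qc M nn i s * Qci M nn s j := by
    intro s
    rcases le_or_gt s i with h | h
    · show Qc M (Qbnd M hM i) i s * Qci M (Qbnd M hM s) s j = _
      rw [← (Qbnd_spec M hM i nn (hble i (le_refl i))).1 s,
        ← (Qbnd_spec M hM s nn (hble s h)).2 j]
    · show Qc M (Qbnd M hM i) i s * Qci M (Qbnd M hM s) s j = _
      rw [LT_Qc M hM (Qbnd M hM i) h, LT_Qc M hM nn h, zero_mul, zero_mul]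
  have he : mul (Qlim M hM) (Qilim M hM) i j = mul (Qc M nn) (Qci M nn) i j := by
    show (∑ᶠ s, Qlim M hM i s * Qilim M hM s j) = ∑ᶠ s, Qc M nn i s * Qci M nn s j
    exact finsum_congr hpt
  rw [he, (Qc_Qci M hM nn).1]

lemma Qilim_Qlim (M : ℕ → ℕ → k) (hM : RowFinite M) :
    mul (Qilim M hM) (Qlim M hM) = one := by
  funext i j
  set nn := Finset.sup (Finset.range (i+1)) (fun s => Qbnd M hM s) with hnn
  have hble : ∀ s, s ≤ i → Qbnd M hM s ≤ nn :=
    fun s hs => Finset.le_sup (Finset.mem_range.mpr (by omega))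
  have hpt : ∀ s, Qilim M hM i s * Qlim M hM s j = Qci M nn i s * Qc M nn s j := by
    intro s
    rcases le_or_gt s i with h | h
    · show Qci M (Qbnd M hM i) i s * Qc M (Qbnd M hM s) s j = _
      rw [← (Qbnd_spec M hM i nn (hble i (le_refl i))).2 s,
        ← (Qbnd_spec M hM s nn (hble s h)).1 j]
    · show Qci M (Qbnd M hM i) i s * Qc M (Qbnd M hM s) s j = _
      rw [LT_Qci M hM (Qbnd M hM i) h, LT_Qci M hM nn h, zero_mul, zero_mul]
  have he : mul (Qilim M hM) (Qlim M hM) i j = mul (Qci M nn) (Qc M nn) i j := by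
    show (∑ᶠ s, Qilim M hM i s * Qlim M hM s j) = ∑ᶠ s, Qci M nn i s * Qc M nn s j
    exact finsum_congr hpt
  rw [he, (Qc_Qci M hM nn).2]

lemma Nmat_fact (M : ℕ → ℕ → k) (hM : RowFinite M) :
    Nmat M = mul (Plim M) (mul M (Qlim M hM)) := by
  funext i j
  set nn := max (i+1)
    (Finset.sup (Finset.range (i+1))
      (fun s => Finset.sup ((hM s).toFinset) (fun t => Qbnd M hM t))) with hnn
  have hi : i < nn := lt_of_lt_of_le (Nat.lt_succ_self i) (le_max_left _ _)
  have h1 : Nmat M i j = S M nn i j := (stab_ge M hM nn i hi j).symm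
  rw [h1, S_fact M hM nn]
  have hpt : ∀ s, Pc M nn i s * mul M (Qc M nn) s j
      = Plim M i s * mul M (Qlim M hM) s j := by
    intro s
    rcases le_or_gt s i with h | h
    · have e1 : Pc M nn i s = Plim M i s := Pc_stab M nn i (by omega) s
      have e2 : mul M (Qc M nn) s j = mul M (Qlim M hM) s j := by
        show (∑ᶠ t, M s t * Qc M nn t j) = ∑ᶠ t, M s t * Qlim M hM t j
        apply finsum_congr
        intro t
        by_cases hMt : M s t = 0
        · rw [hMt, zero_mul, zero_mul]
        · have ht : t ∈ (hM s).toFinset := by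
            rw [Set.Finite.mem_toFinset]; exact hMt
          have hle : Qbnd M hM t ≤ nn := by
            refine le_trans (le_trans (Finset.le_sup ht) ?_) (le_max_right _ _)
            exact Finset.le_sup (f := fun s => Finset.sup ((hM s).toFinset)
              (fun t => Qbnd M hM t)) (Finset.mem_range.mpr (by omega))
          rw [(Qbnd_spec M hM t nn hle).1 j]
          rfl
      rw [e1, e2]
    · rw [LT_Pc M nn h, show Plim M i s = 0 from LT_Pc M i h, zero_mul, zero_mul]
  show (∑ᶠ s, Pc M nn i s * mul M (Qc M nn) s j)
      = ∑ᶠ s, Plim M i s * mul M (Qlim M hM) s j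
  exact finsum_congr hpt

lemma apply_inv {X Y : ℕ → ℕ → k} (hX : RowFinite X) (hY : RowFinite Y)
    (h : mul X Y = one) (a : ℕ → k) : mApply X (mApply Y a) = a := by
  rw [mApply_mul hX hY, h, mApply_one]

end Canon

/-- **Canonical form for textile linear maps on arc space.**
Every textile linear map `ℓ : A → A` (i.e. every row-finite `ℕ²`-matrix over `k`) is
equivalent to a textile linear map in canonical form: there exist invertible textile linear
maps `P, Q` (with textile linear inverses) such that `P∘ℓ∘Q` is given by a row-finite matrix
with at most one nonzero entry in each row and in each column. -/


theorem canonical_form_textile_linear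
    {k : Type} [Field k] [CharZero k]
    (M : ℕ → ℕ → k) (hM : RowFinite M) :
    ∃ P Pinv Q Qinv N : ℕ → ℕ → k,
      RowFinite P ∧ RowFinite Pinv ∧ RowFinite Q ∧ RowFinite Qinv ∧ RowFinite N ∧
      (∀ a, mApply P (mApply Pinv a) = a) ∧
      (∀ a, mApply Pinv (mApply P a) = a) ∧
      (∀ a, mApply Q (mApply Qinv a) = a) ∧
      (∀ a, mApply Qinv (mApply Q a) = a) ∧
      (∀ a, mApply P (mApply M (mApply Q a)) = mApply N a) ∧
      CanonicalForm N := by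
  have hP := (Canon.LT_Plim M).rowFinite
  have hPi := (Canon.LT_Pilim M).rowFinite
  have hQ := (Canon.LT_Qlim M hM).rowFinite
  have hQi := (Canon.LT_Qilim M hM).rowFinite
  refine ⟨Canon.Plim M, Canon.Pilim M, Canon.Qlim M hM, Canon.Qilim M hM, Canon.Nmat M,
    hP, hPi, hQ, hQi, Canon.Nmat_rowFinite M hM,
    Canon.apply_inv hP hPi (Canon.Plim_Pilim M),
    Canon.apply_inv hPi hP (Canon.Pilim_Plim M),
    Canon.apply_inv hQ hQi (Canon.Qlim_Qilim M hM),
    Canon.apply_inv hQi hQ (Canon.Qilim_Qlim M hM),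
    ?_, Canon.Nmat_canonical M hM⟩
  intro a
  rw [Canon.mApply_mul hM hQ, Canon.mApply_mul hP (Canon.rowFinite_mul hM hQ),
    Canon.Nmat_fact M hM]
end
end

section
/- Existence of scissions for textile linear maps: Every textile linear map ℓ : A → A admits a textile linear scission, i.e. there exists a textile linear map σ : A → A with ℓ∘σ∘ℓ = ℓ. -/
/- Existence of scissions for textile linear maps. -/

noncomputable section

/-- `∑ᶠ j, f j * a j` for a finsupp `f` is `Finsupp.linearCombination a f`. -/
lemma pair_eq {k : Type} [Field k] (f : ℕ →₀ k) (a : ℕ → k) :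
    ∑ᶠ j, f j * a j = Finsupp.linearCombination k a f := by
  rw [Finsupp.linearCombination_apply, Finsupp.sum]
  refine finsum_eq_finset_sum_of_support_subset _ ?_
  intro x hx
  simp only [Function.mem_support, ne_eq] at hx
  simp only [Finset.coe_sort_coe, Finsupp.mem_support_iff, Finset.mem_coe]
  intro h
  apply hx
  rw [h, zero_mul]

/-- Evaluating a linear functional via linear combination of its values on basis vectors. -/
lemma lc_single_one {k : Type} [Field k] (L : (ℕ →₀ k) →ₗ[k] k) (f : ℕ →₀ k) :
    Finsupp.linearCombination k (fun p => L (Finsupp.single p 1)) f = L f := by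
  induction f using Finsupp.induction_linear with
  | zero => simp
  | add f g hf hg => simp [map_add, hf, hg]
  | single p c =>
    rw [Finsupp.linearCombination_single, ← Finsupp.smul_single_one p c, map_smul]

/-- **Existence of scissions for textile linear maps.**
Every textile linear map `ℓ : A → A` on the arc space admits a textile linear scission `σ`,
i.e. `ℓ∘σ∘ℓ = ℓ`. -/
theorem scission_exists_textile_linear
    {k : Type} [Field k] [CharZero k]
    (M : ℕ → ℕ → k) (hM : RowFinite M) :
    ∃ S : ℕ → ℕ → k, RowFinite S ∧
      ∀ a, mApply M (mApply S (mApply M a)) = mApply M a := by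
  classical
  -- the rows of `M` as finitely supported vectors
  set r : ℕ → (ℕ →₀ k) := fun i => Finsupp.ofSupportFinite (M i) (hM i) with hr
  -- the "transpose" action on finitely supported vectors
  set μ : (ℕ →₀ k) →ₗ[k] (ℕ →₀ k) := Finsupp.linearCombination k r with hμ
  have hμsingle : ∀ p, μ (Finsupp.single p 1) = r p := by
    intro p; rw [hμ, Finsupp.linearCombination_single, one_smul]
  -- a projection onto the range of μ
  obtain ⟨π, hπ⟩ := @LinearMap.exists_leftInverse_of_injective k (LinearMap.range μ) (ℕ →₀ k)
    _ _ _ _ _ ((LinearMap.range μ).subtype) ((LinearMap.range μ).ker_subtype)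
  -- a section of μ onto its range
  haveI : Module.Free k ↥(LinearMap.range μ) := Module.Free.of_basis (Module.Basis.ofVectorSpace k ↥(LinearMap.range μ))
  obtain ⟨g, hg⟩ := μ.rangeRestrict.exists_rightInverse_of_surjective
    (LinearMap.range_rangeRestrict μ)
  set ν : (ℕ →₀ k) →ₗ[k] (ℕ →₀ k) := g.comp π with hν
  have hfix : ∀ x, μ (ν (μ x)) = μ x := by
    intro x
    have h1 : π (μ x) = ⟨μ x, ⟨x, rfl⟩⟩ := by
      have := LinearMap.congr_fun hπ (⟨μ x, ⟨x, rfl⟩⟩ : LinearMap.range μ)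
      simpa using this
    have h2 : ∀ y : LinearMap.range μ, μ (g y) = (y : ℕ →₀ k) := by
      intro y
      have := LinearMap.congr_fun hg y
      simp only [LinearMap.coe_comp, Function.comp_apply, LinearMap.id_coe, id_eq] at this
      calc μ (g y) = (μ.rangeRestrict (g y) : ℕ →₀ k) := rfl
        _ = (y : ℕ →₀ k) := by rw [this]
    rw [hν, LinearMap.comp_apply, h1, h2]
  refine ⟨fun p q => (ν (Finsupp.single p 1)) q, ?_, ?_⟩
  · intro p
    exact (ν (Finsupp.single p 1)).finite_support
  · intro a
    funext i
    have hrM : ∀ i j, M i j = r i j := fun i j => rfl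
    have key : ∀ (b : ℕ → k) (i : ℕ),
        mApply M b i = Finsupp.linearCombination k b (r i) := by
      intro b i
      simp only [mApply]
      rw [← pair_eq]
      rfl
    have keyS : ∀ (b : ℕ → k) (p : ℕ),
        mApply (fun p q => (ν (Finsupp.single p 1)) q) b p
          = Finsupp.linearCombination k b (ν (Finsupp.single p 1)) := by
      intro b p
      simp only [mApply]
      rw [← pair_eq]
    set ψ : (ℕ →₀ k) →ₗ[k] k := Finsupp.linearCombination k a with hψ
    have step1 : mApply M a = fun q => (ψ.comp μ) (Finsupp.single q 1) := by
      funext q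
      rw [key a q, LinearMap.comp_apply, hμsingle]
    have step2 : mApply (fun p q => (ν (Finsupp.single p 1)) q) (mApply M a)
        = fun p => ((ψ.comp μ).comp ν) (Finsupp.single p 1) := by
      funext p
      rw [keyS, step1, lc_single_one (ψ.comp μ) (ν (Finsupp.single p 1))]
      rfl
    rw [key, step2, lc_single_one ((ψ.comp μ).comp ν) (r i)]
    have : ((ψ.comp μ).comp ν) (r i) = ψ (μ (ν (μ (Finsupp.single i 1)))) := by
      simp [hμsingle]
    rw [this, hfix, hμsingle, key]
end
end

section
/- Linearization of quasi-submersions: Let f : U → C^p be a textile map on an m-adic neighbourhood U = m^l·C^m of 0 with f(0) = 0, written f = ℓ + h with ℓ = T_0 f. Assume f is a quasi-submersion, i.e. im(h) ⊆ im(ℓ), and that ℓ admits a scission σ such that σ∘h is contractive on U. Then u = id + σ∘h is a bijection of U onto itself and f = ℓ ∘ u on U; in particular f(U) = ℓ(U). -/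
/- Linearization of quasi-submersions. -/

noncomputable section

open MvPowerSeries

/-- The tangent map `T_a f · v = Σ_ν ∂_ν f(a) · v_ν` of a textile map, obtained by
coefficientwise partial differentiation of the defining polynomials. -/
def TexData.tangent {k : Type} [Field k] {n q p : ℕ} (F : TexData k n q p)
    (a v : Fin q → MvPowerSeries (Fin n) k) : Fin p → MvPowerSeries (Fin n) k :=
  fun j => (fun d => ∑ᶠ ν : Fin q × (Fin n →₀ ℕ),
    MvPolynomial.eval (cf a) (MvPolynomial.pderiv ν (F (j, d))) * cf v ν : (Fin n →₀ ℕ) → k)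

namespace QSL

variable {k : Type} [Field k] {n q p : ℕ}

/-- All coefficients of degree `< N` vanish. -/
def Pv (N : ℕ) (x : Fin q → MvPowerSeries (Fin n) k) : Prop :=
  ∀ (j : Fin q) (d : Fin n →₀ ℕ), (d.sum fun _ e => e) < N →
    MvPowerSeries.coeff d (x j) = 0

lemma mem_nbhd_iff {l : ℕ} {x : Fin q → MvPowerSeries (Fin n) k} :
    x ∈ nbhd k n q l ↔ Pv l x := Iff.rfl

lemma Pv_mono {N N' : ℕ} (h : N' ≤ N) {x : Fin q → MvPowerSeries (Fin n) k}
    (hx : Pv N x) : Pv N' x := fun j d hd => hx j d (lt_of_lt_of_le hd h)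

lemma Pv_zero (N : ℕ) : Pv N (0 : Fin q → MvPowerSeries (Fin n) k) := by
  intro j d _; simp

lemma Pv_add {N : ℕ} {x y : Fin q → MvPowerSeries (Fin n) k}
    (hx : Pv N x) (hy : Pv N y) : Pv N (x + y) := by
  intro j d hd
  simp [Pi.add_apply, map_add, hx j d hd, hy j d hd]

lemma Pv_neg {N : ℕ} {x : Fin q → MvPowerSeries (Fin n) k}
    (hx : Pv N x) : Pv N (-x) := by
  intro j d hd
  simp [Pi.neg_apply, map_neg, hx j d hd]

lemma Pv_sub {N : ℕ} {x y : Fin q → MvPowerSeries (Fin n) k}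
    (hx : Pv N x) (hy : Pv N y) : Pv N (x - y) := by
  rw [sub_eq_add_neg]; exact Pv_add hx (Pv_neg hy)

lemma Pv_iff_le_ordV (N : ℕ) (x : Fin q → MvPowerSeries (Fin n) k) :
    Pv N x ↔ (N : ℕ∞) ≤ ordV x := by
  rw [ordV, le_sInf_iff]
  constructor
  · rintro H _ ⟨j, d, hc, rfl⟩
    by_contra hlt
    push_neg at hlt
    rw [Nat.cast_lt] at hlt
    exact hc (H j d hlt)
  · intro H j d hd
    by_contra hc
    have := H _ ⟨j, d, hc, rfl⟩
    rw [Nat.cast_le] at this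
    omega

lemma ordV_sub_comm (x y : Fin q → MvPowerSeries (Fin n) k) :
    ordV (x - y) = ordV (y - x) := by
  unfold ordV
  congr 1
  ext N
  constructor <;> rintro ⟨j, d, hc, rfl⟩ <;> refine ⟨j, d, ?_, rfl⟩ <;>
    simp only [Pi.sub_apply, map_sub, sub_ne_zero] at hc ⊢ <;> exact hc.symm

lemma cf_zero : cf (0 : Fin q → MvPowerSeries (Fin n) k) = 0 := by
  funext ν; simp [cf]

lemma cf_add (x y : Fin q → MvPowerSeries (Fin n) k) : cf (x + y) = cf x + cf y := by
  funext ν; simp [cf, Pi.add_apply, map_add]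

lemma gsupp (P : MvPolynomial (Fin q × (Fin n →₀ ℕ)) k) (w : Fin q × (Fin n →₀ ℕ) → k) :
    (Function.support fun ν => MvPolynomial.eval w (MvPolynomial.pderiv ν P)).Finite := by
  apply Set.Finite.subset P.vars.finite_toSet
  intro ν hν
  simp only [Function.mem_support] at hν
  by_contra hm
  rw [MvPolynomial.pderiv_eq_zero_of_notMem_vars hm] at hν
  simp at hν

lemma coeff_tangent {F : TexData k n q p} (a v : Fin q → MvPowerSeries (Fin n) k)
    (j : Fin p) (d : Fin n →₀ ℕ) :
    MvPowerSeries.coeff d (F.tangent a v j) = ∑ᶠ ν : Fin q × (Fin n →₀ ℕ),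
      MvPolynomial.eval (cf a) (MvPolynomial.pderiv ν (F (j, d))) * cf v ν := rfl

lemma tangent_zero (F : TexData k n q p) :
    F.tangent 0 (0 : Fin q → MvPowerSeries (Fin n) k) = 0 := by
  funext j
  ext d
  rw [coeff_tangent]
  simp [cf_zero]

lemma tangent_add (F : TexData k n q p) (x y : Fin q → MvPowerSeries (Fin n) k) :
    F.tangent 0 (x + y) = F.tangent 0 x + F.tangent 0 y := by
  funext j
  ext d
  rw [Pi.add_apply, map_add, coeff_tangent, coeff_tangent, coeff_tangent]
  rw [cf_add]
  have h1 : (Function.support fun ν =>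
      MvPolynomial.eval (cf (0 : Fin q → MvPowerSeries (Fin n) k))
        (MvPolynomial.pderiv ν (F (j, d))) * cf x ν).Finite := by
    apply Set.Finite.subset (gsupp (F (j,d)) (cf (0 : Fin q → MvPowerSeries (Fin n) k)))
    intro ν hν
    simp only [Function.mem_support] at hν ⊢
    intro h0; rw [h0, zero_mul] at hν; exact hν rfl
  have h2 : (Function.support fun ν =>
      MvPolynomial.eval (cf (0 : Fin q → MvPowerSeries (Fin n) k))
        (MvPolynomial.pderiv ν (F (j, d))) * cf y ν).Finite := by
    apply Set.Finite.subset (gsupp (F (j,d)) (cf (0 : Fin q → MvPowerSeries (Fin n) k)))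
    intro ν hν
    simp only [Function.mem_support] at hν ⊢
    intro h0; rw [h0, zero_mul] at hν; exact hν rfl
  rw [← finsum_add_distrib h1 h2]
  congr 1
  funext ν
  rw [Pi.add_apply, mul_add]

/-- The iteration sequence of the map `T` started at `c`. -/
def seqq (T : (Fin q → MvPowerSeries (Fin n) k) → (Fin q → MvPowerSeries (Fin n) k))
    (c : Fin q → MvPowerSeries (Fin n) k) : ℕ → Fin q → MvPowerSeries (Fin n) k
  | 0 => c
  | K + 1 => T (seqq T c K)

/-- The coefficientwise limit of a sequence of vectors of cords. -/
def limitV (s : ℕ → Fin q → MvPowerSeries (Fin n) k) : Fin q → MvPowerSeries (Fin n) k :=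
  fun j => (fun d => MvPowerSeries.coeff d (s ((d.sum fun _ e => e) + 1) j) :
    (Fin n →₀ ℕ) → k)

lemma coeff_limitV (s : ℕ → Fin q → MvPowerSeries (Fin n) k) (j : Fin q) (d : Fin n →₀ ℕ) :
    MvPowerSeries.coeff d (limitV s j) =
      MvPowerSeries.coeff d (s ((d.sum fun _ e => e) + 1) j) := rfl

/-- m-adic fixed point argument: if `h` maps `U = m^l·C^q` into itself and is contractive
in the sense of `hstep`, then `id + h` is surjective on `U`. -/
lemma fixed_point (l : ℕ)
    (h : (Fin q → MvPowerSeries (Fin n) k) → (Fin q → MvPowerSeries (Fin n) k))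
    (hhU : ∀ a ∈ nbhd k n q l, h a ∈ nbhd k n q l)
    (hstep : ∀ a ∈ nbhd k n q l, ∀ b ∈ nbhd k n q l, ∀ N : ℕ,
      Pv N (a - b) → Pv (N + 1) (h a - h b)) :
    ∀ c ∈ nbhd k n q l, ∃ a ∈ nbhd k n q l, a + h a = c := by
  intro c hc
  set T : (Fin q → MvPowerSeries (Fin n) k) → (Fin q → MvPowerSeries (Fin n) k) :=
    fun x => c - h x with hT
  have hseqS : ∀ K, seqq T c (K + 1) = T (seqq T c K) := fun K => rfl
  have claim : ∀ K, seqq T c K ∈ nbhd k n q l ∧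
      Pv (l + K) (seqq T c (K + 1) - seqq T c K) := by
    intro K
    induction K with
    | zero =>
      refine ⟨hc, ?_⟩
      have e : seqq T c (0 + 1) - seqq T c 0 = -(h c) := by
        show (c - h c) - c = -(h c)
        abel
      rw [e]
      exact Pv_mono (by omega) (Pv_neg (mem_nbhd_iff.mp (hhU c hc)))
    | succ K ih =>
      obtain ⟨hKU, hKP⟩ := ih
      have hK1U : seqq T c (K + 1) ∈ nbhd k n q l := by
        rw [hseqS]
        exact mem_nbhd_iff.mpr (Pv_sub (mem_nbhd_iff.mp hc) (mem_nbhd_iff.mp (hhU _ hKU)))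
      refine ⟨hK1U, ?_⟩
      have hP := hstep (seqq T c (K + 1)) hK1U (seqq T c K) hKU (l + K) hKP
      have e : seqq T c (K + 1 + 1) - seqq T c (K + 1)
          = -(h (seqq T c (K + 1)) - h (seqq T c K)) := by
        show (c - h (seqq T c (K + 1))) - (c - h (seqq T c K)) = _
        abel
      rw [e]
      exact Pv_mono (by omega) (Pv_neg hP)
  have stab : ∀ K k1 k2, K ≤ k1 → k1 ≤ k2 → Pv K (seqq T c k2 - seqq T c k1) := by
    intro K k1 k2 hK h12
    induction k2, h12 using Nat.le_induction with
    | base => rw [sub_self]; exact Pv_zero K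
    | succ k2 hk2 ih =>
      have e : seqq T c (k2 + 1) - seqq T c k1
          = (seqq T c (k2 + 1) - seqq T c k2) + (seqq T c k2 - seqq T c k1) := by abel
      rw [e]
      exact Pv_add (Pv_mono (by omega) (claim k2).2) ih
  have hcl : ∀ (j : Fin q) (d : Fin n →₀ ℕ) (K : ℕ), (d.sum fun _ e => e) < K →
      MvPowerSeries.coeff d (limitV (seqq T c) j)
        = MvPowerSeries.coeff d (seqq T c K j) := by
    intro j d K hdK
    rw [coeff_limitV]
    rcases le_total ((d.sum fun _ e => e) + 1) K with hK | hK
    · have := stab ((d.sum fun _ e => e) + 1) ((d.sum fun _ e => e) + 1) K le_rfl hK j d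
        (by omega)
      rw [Pi.sub_apply, map_sub, sub_eq_zero] at this
      exact this.symm
    · have := stab K K ((d.sum fun _ e => e) + 1) le_rfl hK j d hdK
      rw [Pi.sub_apply, map_sub, sub_eq_zero] at this
      exact this
  have haU : limitV (seqq T c) ∈ nbhd k n q l := by
    intro j d hd
    rw [coeff_limitV]
    exact (claim ((d.sum fun _ e => e) + 1)).1 j d hd
  have hak : ∀ K, Pv K (limitV (seqq T c) - seqq T c K) := by
    intro K j d hd
    rw [Pi.sub_apply, map_sub, hcl j d K hd, sub_self]
  have hPfix : ∀ K : ℕ, Pv (K + 1) (limitV (seqq T c) - T (limitV (seqq T c))) := by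
    intro K
    have h1 : Pv (K + 1) (limitV (seqq T c) - seqq T c (K + 1)) := hak (K + 1)
    have h2 := hstep (limitV (seqq T c)) haU (seqq T c K) (claim K).1 K (hak K)
    have e : limitV (seqq T c) - T (limitV (seqq T c))
        = (limitV (seqq T c) - seqq T c (K + 1))
          + (h (limitV (seqq T c)) - h (seqq T c K)) := by
      rw [hseqS]
      show limitV (seqq T c) - (c - h (limitV (seqq T c)))
        = (limitV (seqq T c) - (c - h (seqq T c K)))
          + (h (limitV (seqq T c)) - h (seqq T c K))
      abel
    rw [e]
    exact Pv_add h1 h2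
  have hfix : limitV (seqq T c) - T (limitV (seqq T c)) = 0 := by
    funext j
    ext d
    have := hPfix (d.sum fun _ e => e) j d (by omega)
    simpa using this
  have hfix' : limitV (seqq T c) = c - h (limitV (seqq T c)) := sub_eq_zero.mp hfix
  exact ⟨limitV (seqq T c), haU, eq_sub_iff_add_eq.mp hfix'⟩

end QSL

/-- **Linearization of quasi-submersions.**
Let `f = ℓ + h` be a textile map on `U = m^l·C^m` with `f(0) = 0` and `ℓ = T_0 f`. Assume
`f` is a quasi-submersion (`im h ⊆ im ℓ`) and that `ℓ` admits a scission `σ` with `σ∘h`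
contractive on `U`. Then `u = id + σ∘h` is a bijection of `U` onto itself and `f = ℓ∘u` on
`U`; in particular `f(U) = ℓ(U)`. -/
theorem quasi_submersion_linearization
    {k : Type} [Field k] [CharZero k] {n m p : ℕ} (l : ℕ)
    (U : Set (Fin m → MvPowerSeries (Fin n) k)) (hU : U = nbhd k n m l)
    (F : TexData k n m p) (hf0 : F.eval 0 = 0)
    (hquasi : ∀ a ∈ U, ∃ z, F.tangent 0 z = F.eval a - F.tangent 0 a)
    (σd : TexData k n p m) (hσ_lin : IsLinearMap k σd.eval)
    (hscis : ∀ z, F.tangent 0 (σd.eval (F.tangent 0 z)) = F.tangent 0 z)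
    (hcontr : ∀ a ∈ U, ∀ b ∈ U, a ≠ b →
      ordV (a - b) < ordV (σd.eval (F.eval a - F.tangent 0 a) -
        σd.eval (F.eval b - F.tangent 0 b))) :
    Set.BijOn (fun a => a + σd.eval (F.eval a - F.tangent 0 a)) U U ∧
    (∀ a ∈ U, F.eval a = F.tangent 0 (a + σd.eval (F.eval a - F.tangent 0 a))) ∧
    F.eval '' U = (fun z => F.tangent 0 z) '' U := by
  classical
  subst hU
  have h0U : (0 : Fin m → MvPowerSeries (Fin n) k) ∈ nbhd k n m l := by
    intro j d _; simp
  have h0 : σd.eval (F.eval (0 : Fin m → MvPowerSeries (Fin n) k) - F.tangent 0 0) = 0 := by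
    rw [hf0, QSL.tangent_zero, sub_zero, hσ_lin.map_zero]
  -- contraction step
  have hstep : ∀ a ∈ nbhd k n m l, ∀ b ∈ nbhd k n m l, ∀ N : ℕ, QSL.Pv N (a - b) →
      QSL.Pv (N + 1) (σd.eval (F.eval a - F.tangent 0 a)
        - σd.eval (F.eval b - F.tangent 0 b)) := by
    intro a ha b hb N hab
    by_cases hne : a = b
    · subst hne
      rw [sub_self]
      exact QSL.Pv_zero _
    · have h1 := hcontr a ha b hb hne
      rw [QSL.Pv_iff_le_ordV] at hab ⊢
      have h2 : (N : ℕ∞) < ordV (σd.eval (F.eval a - F.tangent 0 a)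
          - σd.eval (F.eval b - F.tangent 0 b)) := lt_of_le_of_lt hab h1
      calc ((N + 1 : ℕ) : ℕ∞) = (N : ℕ∞) + 1 := by push_cast; ring
        _ ≤ _ := Order.add_one_le_of_lt h2
  have hhU : ∀ a ∈ nbhd k n m l, σd.eval (F.eval a - F.tangent 0 a) ∈ nbhd k n m l := by
    intro a ha
    have hPa : QSL.Pv l (a - 0) := by rw [sub_zero]; exact ha
    have := hstep a ha 0 h0U l hPa
    rw [h0, sub_zero] at this
    exact QSL.Pv_mono (Nat.le_succ l) this
  -- injectivity
  have hinj : Set.InjOn (fun a => a + σd.eval (F.eval a - F.tangent 0 a)) (nbhd k n m l) := by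
    intro x hx y hy hxy
    by_contra hne
    have hxy' : x + σd.eval (F.eval x - F.tangent 0 x)
        = y + σd.eval (F.eval y - F.tangent 0 y) := hxy
    have h1 := hcontr x hx y hy hne
    have e : σd.eval (F.eval x - F.tangent 0 x) - σd.eval (F.eval y - F.tangent 0 y)
        = y - x := by
      rw [sub_eq_sub_iff_add_eq_add, add_comm]
      exact hxy'
    rw [e, ← QSL.ordV_sub_comm x y] at h1
    exact lt_irrefl _ h1
  -- surjectivity via the fixed point lemma
  have hsurj := QSL.fixed_point l (fun a => σd.eval (F.eval a - F.tangent 0 a)) hhU hstep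
  -- part 2
  have hpart2 : ∀ a ∈ nbhd k n m l,
      F.eval a = F.tangent 0 (a + σd.eval (F.eval a - F.tangent 0 a)) := by
    intro a haa
    obtain ⟨z, hz⟩ := hquasi a haa
    have hLh : F.tangent 0 (σd.eval (F.eval a - F.tangent 0 a))
        = F.eval a - F.tangent 0 a := by
      rw [← hz]
      exact hscis z
    rw [QSL.tangent_add, hLh]
    abel
  have hmaps : Set.MapsTo (fun a => a + σd.eval (F.eval a - F.tangent 0 a))
      (nbhd k n m l) (nbhd k n m l) := by
    intro a haa
    exact QSL.Pv_add haa (QSL.mem_nbhd_iff.mp (hhU a haa))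
  refine ⟨⟨hmaps, hinj, ?_⟩, hpart2, ?_⟩
  · intro c hc
    obtain ⟨a, haU, hac⟩ := hsurj c hc
    exact ⟨a, haU, hac⟩
  · apply Set.Subset.antisymm
    · rintro _ ⟨a, haa, rfl⟩
      exact ⟨a + σd.eval (F.eval a - F.tangent 0 a), hmaps haa, (hpart2 a haa).symm⟩
    · rintro _ ⟨z, hz, rfl⟩
      obtain ⟨a0, ha0, hac⟩ := hsurj z hz
      exact ⟨a0, ha0, by rw [hpart2 a0 ha0, hac]⟩
end
end
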